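/- arXiv:0805.1916 — 2 statements merged into one kernel-verified Lean document; each statement's English description precedes it below -/
import Mathlib

section
/- Let X be a closed subvariety of the torus T^m over k with ideal I ⊆ k[x_1^{±1}, ..., x_m^{±1}], and define trop(X) = {v ∈ ℝ^m : for every nonzero f ∈ I, the minimum of ⟨u, v⟩ over u ∈ supp(f) is attained by at least two distinct u}. For every x ∈ X^an and each i, the coordinate function x_i is a unit in k[X], so |x_i|_x > 0, and the map π : X^an → ℝ^m, x ↦ (−log|x_1|_x, ..., −log|x_m|_x), is well-defined and continuous. Then the image of π is exactly trop(X). -/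
open scoped BigOperators Classical

noncomputable section

/-- The extended real line `R̄ = ℝ ∪ {∞}`. -/
abbrev Rbar : Type := WithTop ℝ

/-- The map `a ↦ exp (−a)`, sending `∞` to `0`. -/
def expNeg (t : Rbar) : ℝ := if h : t = ⊤ then 0 else Real.exp (-(t.untop h))

/-- The topology on `R̄` in which `ℝ` carries its usual topology and the completed rays
`(a, ∞]` are a basis of neighborhoods of `∞`; equivalently, the topology induced by the
injection `expNeg : R̄ → ℝ`, which is a homeomorphism onto `[0, ∞)`. -/
instance : TopologicalSpace Rbar := TopologicalSpace.induced expNeg inferInstance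

/-- `−log r`, with `−log 0 = ∞`. -/
def negLog (r : ℝ) : Rbar := if r = 0 then ⊤ else (((-Real.log r : ℝ)) : Rbar)

/-- `ν : K → ℝ ∪ {∞}` is a (nonarchimedean) valuation: `ν(0) = ∞`,
`ν(ab) = ν(a) + ν(b)`, and `ν(a + b) ≥ min (ν a) (ν b)`. -/
structure IsVal {K : Type} [Field K] (ν : K → Rbar) : Prop where
  map_zero : ν 0 = ⊤
  map_mul : ∀ a b : K, ν (a * b) = ν a + ν b
  min_le_add : ∀ a b : K, min (ν a) (ν b) ≤ ν (a + b)

/-- The valuation `ν` is nontrivial: `ν(K*) ≠ {0}`. -/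
def IsNontrivialVal {K : Type} [Field K] (ν : K → Rbar) : Prop :=
  ∃ a : K, a ≠ 0 ∧ ν a ≠ 0

/-- The trivial valuation on a field `k`: `ν(a) = 0` for `a ≠ 0` and `ν(0) = ∞`. -/
def nuTriv (k : Type) [Field k] : k → Rbar := fun a => if a = 0 then ⊤ else 0

/-- `K` is complete with respect to the valuation `ν`, i.e. with respect to the induced
nonarchimedean absolute value `expNeg ∘ ν`: every Cauchy sequence converges. -/
def VComplete {K : Type} [Field K] (ν : K → Rbar) : Prop :=
  ∀ s : ℕ → K,
    (∀ ε : ℝ, 0 < ε → ∃ N : ℕ, ∀ p ≥ N, ∀ q ≥ N, expNeg (ν (s p - s q)) < ε) →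
    ∃ L : K, ∀ ε : ℝ, 0 < ε → ∃ N : ℕ, ∀ p ≥ N, expNeg (ν (s p - L)) < ε

/-- A multiplicative seminorm on a commutative ring `A`: a nonnegative real-valued
function with `|0| = 0`, `|1| = 1`, `|fg| = |f|·|g|` and `|f + g| ≤ |f| + |g|`. -/
structure IsMultSeminorm {A : Type} [CommRing A] (p : A → ℝ) : Prop where
  nonneg : ∀ f, 0 ≤ p f
  map_zero : p 0 = 0
  map_one : p 1 = 1
  map_mul : ∀ f g, p (f * g) = p f * p g
  add_le : ∀ f g, p (f + g) ≤ p f + p g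

/-- A seminorm on the `K`-algebra `A` is compatible with `ν` if `|a| = exp(−ν(a))` for
every scalar `a ∈ K`. -/
def Compat {K A : Type} [Field K] [CommRing A] [Algebra K A] (ν : K → Rbar) (p : A → ℝ) :
    Prop :=
  ∀ a : K, p (algebraMap K A a) = expNeg (ν a)

/-- The analytification `X^an` of the affine variety `X = Spec A` over the complete
nonarchimedean field `(K, ν)`: the set of multiplicative seminorms on `A` compatible with
`ν`, topologized (as a subset of `A → ℝ` with the product topology) by the coarsest
topology making `x ↦ |f|_x` continuous for every `f ∈ A`. -/
def Xan (K A : Type) [Field K] [CommRing A] [Algebra K A] (ν : K → Rbar) : Set (A → ℝ) :=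
  {p | IsMultSeminorm p ∧ Compat ν p}

/-- The analytification `X^an` over a trivially valued field `k`: the set of
multiplicative seminorms on `A` that are equal to `1` on `k*`, with the topology of
pointwise convergence. -/
def XanTriv (k A : Type) [Field k] [CommRing A] [Algebra k A] : Set (A → ℝ) :=
  {p | IsMultSeminorm p ∧ ∀ a : k, a ≠ 0 → p (algebraMap k A a) = 1}

/-- The projection `π_ι : X^an → R̄^m` attached to the affine embedding `ι` given by the
generators `f 0, ..., f (m-1)` of `A`: `x ↦ (−log|f 0|_x, ..., −log|f (m-1)|_x)`. -/
def piIota {K A : Type} [Field K] [CommRing A] [Algebra K A] (ν : K → Rbar) {m : ℕ}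
    (f : Fin m → A) (x : ↥(Xan K A ν)) : Fin m → Rbar :=
  fun i => negLog (x.1 (f i))

/-- The projection `π_ι : X^an → R̄^m` for a trivially valued base field. -/
def piIotaTriv {k A : Type} [Field k] [CommRing A] [Algebra k A] {m : ℕ}
    (f : Fin m → A) (x : ↥(XanTriv k A)) : Fin m → Rbar :=
  fun i => negLog (x.1 (f i))

/-- The tropicalization `Trop(X, ι)` of the affine embedding `ι : X ↪ A^m` of
`X = Spec A` given by the generators `f` of `A`: the closure in `R̄^m` of the set of
coordinatewise valuations of the `K`-points of `X`. -/
def TropX {K A : Type} [Field K] [CommRing A] [Algebra K A] (ν : K → Rbar) {m : ℕ}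
    (f : Fin m → A) : Set (Fin m → Rbar) :=
  closure {v | ∃ φ : A →ₐ[K] K, v = fun i => ν (φ (f i))}

/-- The tropicalization `Trop(φ) : R̄^m → R̄^n` of the equivariant morphism
`φ : A^m → A^n` whose coordinates are `y_j ↦ c_j · x^{a_j}`, namely
`v ↦ (ν(c_1) + ⟨a_1, v⟩, ..., ν(c_n) + ⟨a_n, v⟩)`, with the conventions `ν(0) = ∞`,
`∞ + t = ∞`, `a_i · ∞ = ∞` for `a_i > 0`, and `0 · ∞ = 0`. -/
def tropMap {K : Type} [Field K] (ν : K → Rbar) {m n : ℕ} (c : Fin n → K)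
    (a : Fin n → Fin m → ℕ) (v : Fin m → Rbar) : Fin n → Rbar :=
  fun j => ν (c j) + ∑ i, (a j i) • v i

/-- The affine embeddings of `X = Spec A`: an embedding `ι : X ↪ A^m` is a tuple of
generators of `A` as a `K`-algebra. -/
def AffEmb (K A : Type) [Field K] [CommRing A] [Algebra K A] : Type :=
  Σ m : ℕ, {f : Fin m → A // Algebra.adjoin K (Set.range f) = ⊤}

/-- The map `X^an → Π_ι R̄^{m(ι)}`, `x ↦ (π_ι(x))_ι`, over all affine embeddings `ι`. -/
def bigMap (K A : Type) [Field K] [CommRing A] [Algebra K A] (ν : K → Rbar)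
    (x : ↥(Xan K A ν)) : ∀ e : AffEmb K A, Fin e.1 → Rbar :=
  fun e => piIota ν e.2.1 x

/-- The inverse limit `varprojlim Trop(X, ι)`, realized inside `Π_ι R̄^{m(ι)}`: families
`(y_ι)` with `y_ι ∈ Trop(X, ι)` for all `ι` and `y_ȷ = Trop(φ)(y_ι)` for every
equivariant morphism `φ : A^{m(ι)} → A^{m(ȷ)}` with `ȷ = φ ∘ ι`. -/
def limitSet (K A : Type) [Field K] [CommRing A] [Algebra K A] (ν : K → Rbar) :
    Set (∀ e : AffEmb K A, Fin e.1 → Rbar) :=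
  {y | (∀ e : AffEmb K A, y e ∈ TropX ν e.2.1) ∧
    ∀ (e e' : AffEmb K A) (c : Fin e'.1 → K) (a : Fin e'.1 → Fin e.1 → ℕ),
      (∀ j, e'.2.1 j = algebraMap K A (c j) * ∏ i, (e.2.1 i) ^ (a j i)) →
      y e' = tropMap ν c a (y e)}

/-- The ring of Laurent polynomials `K[x_1^{±1}, ..., x_m^{±1}]`, i.e. the group algebra
of `ℤ^m` over `K`. -/
abbrev Laur (K : Type) [Field K] (m : ℕ) : Type := AddMonoidAlgebra K (Fin m → ℤ)

/-- Evaluation of a Laurent polynomial at a point `y ∈ K^m` (meaningful when the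
relevant coordinates of `y` are invertible). -/
def lEval {K : Type} [Field K] {m : ℕ} (y : Fin m → K) (g : Laur K m) : K :=
  ∑ u ∈ g.coeff.support, g.coeff u * ∏ i, (y i) ^ (u i)

/-- The tropical minimum of the Laurent polynomial `f` at `v ∈ ℝ^m` is attained twice:
the minimum of `ν(a_u) + ⟨u, v⟩` over `u ∈ supp(f)` is achieved by at least two distinct
`u ∈ supp(f)`.  (Equivalently, the initial form of `f` at `v` is not a monomial.) -/
def MinTwice {K : Type} [Field K] {m : ℕ} (ν : K → Rbar) (f : Laur K m) (v : Fin m → ℝ) :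
    Prop :=
  ∃ u ∈ f.coeff.support, ∃ u' ∈ f.coeff.support, u ≠ u' ∧
    ν (f.coeff u) + ((∑ i, (u i : ℝ) * v i : ℝ) : Rbar)
      = ν (f.coeff u') + ((∑ i, (u' i : ℝ) * v i : ℝ) : Rbar) ∧
    ∀ w ∈ f.coeff.support,
      ν (f.coeff u) + ((∑ i, (u i : ℝ) * v i : ℝ) : Rbar)
        ≤ ν (f.coeff w) + ((∑ i, (w i : ℝ) * v i : ℝ) : Rbar)

/-- With the trivial valuation: the minimum of `⟨u, w⟩` over `supp g` is attained by at
least two distinct `u ∈ supp g`. -/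
def MinTwiceTriv {k : Type} [Field k] {m : ℕ} (g : Laur k m) (w : Fin m → ℝ) : Prop :=
  ∃ u ∈ g.coeff.support, ∃ u' ∈ g.coeff.support, u ≠ u' ∧
    (∑ i, (u i : ℝ) * w i) = (∑ i, (u' i : ℝ) * w i) ∧
    ∀ z ∈ g.coeff.support, (∑ i, (u i : ℝ) * w i) ≤ ∑ i, (z i : ℝ) * w i

/-- The tropicalization `T_trop(J)` of an ideal of Laurent polynomials: the set of
`v ∈ ℝ^m` such that for every nonzero `f ∈ J` the tropical minimum of `f` at `v` is
attained twice. -/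
def Ttrop {K : Type} [Field K] {m : ℕ} (ν : K → Rbar) (J : Ideal (Laur K m)) :
    Set (Fin m → ℝ) :=
  {v | ∀ f ∈ J, f ≠ 0 → MinTwice ν f v}

/-- The `K`-points of the closed subvariety of the torus `T^m` cut out by the ideal `I`:
points of `(K*)^m` at which every element of `I` vanishes. -/
def torusPoints {K : Type} [Field K] {m : ℕ} (I : Ideal (Laur K m)) :
    Set (Fin m → Kˣ) :=
  {y | ∀ f ∈ I, lEval (fun i => (y i : K)) f = 0}

/-- The real number `ν(a)` (with junk value `0` when `ν(a) = ∞`, i.e. when `a = 0`). -/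
def vR {K : Type} [Field K] (ν : K → Rbar) (a : K) : ℝ := WithTop.untopD 0 (ν a)

/-- The set `{trop(y) : y ∈ X(K)} ⊆ ℝ^m` of coordinatewise valuations of the `K`-points
of the closed subvariety of the torus cut out by `I`; `trop(X)` is its closure. -/
def tropImg {K : Type} [Field K] {m : ℕ} (ν : K → Rbar) (I : Ideal (Laur K m)) :
    Set (Fin m → ℝ) :=
  {w | ∃ y ∈ torusPoints I, w = fun i => vR ν ((y i : Kˣ) : K)}

/-- The `K`-points of the closed subvariety of `A^m` cut out by the ideal `J`. -/
def affPoints {K : Type} [Field K] {m : ℕ} (J : Ideal (MvPolynomial (Fin m) K)) :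
    Set (Fin m → K) :=
  {y | ∀ f ∈ J, MvPolynomial.eval y f = 0}

/-- The extended tropicalization in `R̄^m` of a set of points of `A^m(K)`: the closure of
the set of coordinatewise valuations. -/
def TropAff {K : Type} [Field K] {m : ℕ} (ν : K → Rbar) (S : Set (Fin m → K)) :
    Set (Fin m → Rbar) :=
  closure {v | ∃ y ∈ S, v = fun i => ν (y i)}

/-- The coefficientwise extension map
`k[x_1^{±1}, ..., x_m^{±1}] → K[x_1^{±1}, ..., x_m^{±1}]` along `algebraMap k K`. -/
def laurExt (k K : Type) [Field k] [Field K] [Algebra k K] (m : ℕ) :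
    Laur k m →ₐ[k] Laur K m :=
  (AddMonoidAlgebra.lift k (Laur K m) (Fin m → ℤ)) (AddMonoidAlgebra.of K (Fin m → ℤ))

/-- The `i`-th coordinate function `x_i` in the coordinate ring
`k[X] = k[x_1^{±1}, ..., x_m^{±1}] / I` of a closed subvariety of the torus. -/
def coordLaur {k : Type} [Field k] {m : ℕ} (I : Ideal (Laur k m)) (i : Fin m) :
    Laur k m ⧸ I :=
  Ideal.Quotient.mk I (AddMonoidAlgebra.single (Pi.single i (1 : ℤ)) (1 : k))

/-- The projection `π : X^an → ℝ^m`, `x ↦ (−log|x_1|_x, ..., −log|x_m|_x)`, for a closed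
subvariety of the torus over a trivially valued field. -/
def piTorus {k : Type} [Field k] {m : ℕ} (I : Ideal (Laur k m))
    (x : ↥(XanTriv k (Laur k m ⧸ I))) : Fin m → ℝ :=
  fun i => -Real.log (x.1 (coordLaur I i))

/-- `trop(X)` for a closed subvariety of the torus over a trivially valued field: the
set of `v ∈ ℝ^m` such that for every nonzero `f ∈ I` the minimum of `⟨u, v⟩` over
`supp f` is attained at least twice. -/
def tropTrivTorus {k : Type} [Field k] {m : ℕ} (I : Ideal (Laur k m)) :
    Set (Fin m → ℝ) :=
  {v | ∀ f ∈ I, f ≠ 0 → MinTwiceTriv f v}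

/-- The vanishing ideal of `X ∩ T^{I₀}` for the affine embedding of `X = Spec A` given
by generators `f`: Laurent polynomials in the variables `x_i`, `i ∈ I₀` (support
condition), vanishing at every `k`-point `y` of `X` with `y_i ≠ 0` iff `i ∈ I₀`. -/
def stratVanishing (k A : Type) [Field k] [CommRing A] [Algebra k A] {m : ℕ}
    (f : Fin m → A) (I0 : Finset (Fin m)) : Set (Laur k m) :=
  {g | (∀ u ∈ g.coeff.support, ∀ i, i ∉ I0 → u i = 0) ∧
    ∀ φ : A →ₐ[k] k, (∀ i, φ (f i) ≠ 0 ↔ i ∈ I0) → lEval (fun i => φ (f i)) g = 0}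

/-- The extended tropicalization `Trop(X, ι) ⊆ R̄^m` over a trivially valued field: the
union over `I₀ ⊆ {1, ..., m}` of the sets `trop(X ∩ T^{I₀})`, each embedded in the
stratum `ℝ^{I₀} = {v : v_i < ∞ iff i ∈ I₀}` (coordinates `∞` off `I₀`). -/
def TropStrat (k A : Type) [Field k] [CommRing A] [Algebra k A] {m : ℕ}
    (f : Fin m → A) : Set (Fin m → Rbar) :=
  {v | ∃ (I0 : Finset (Fin m)) (w : Fin m → ℝ),
        (v = fun i => if i ∈ I0 then ((w i : ℝ) : Rbar) else ⊤) ∧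
        ∀ g ∈ stratVanishing k A f I0, g ≠ 0 → MinTwiceTriv g w}

/-- The map `X^an → Π_ι R̄^{m(ι)}` over a trivially valued field. -/
def bigMapTriv (k A : Type) [Field k] [CommRing A] [Algebra k A]
    (x : ↥(XanTriv k A)) : ∀ e : AffEmb k A, Fin e.1 → Rbar :=
  fun e => piIotaTriv e.2.1 x

/-- The inverse limit `varprojlim Trop(X, ι)` over a trivially valued field, realized
inside `Π_ι R̄^{m(ι)}`. -/
def limitSetTriv (k A : Type) [Field k] [CommRing A] [Algebra k A] :
    Set (∀ e : AffEmb k A, Fin e.1 → Rbar) :=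
  {y | (∀ e : AffEmb k A, y e ∈ TropStrat k A e.2.1) ∧
    ∀ (e e' : AffEmb k A) (c : Fin e'.1 → k) (a : Fin e'.1 → Fin e.1 → ℕ),
      (∀ j, e'.2.1 j = algebraMap k A (c j) * ∏ i, (e.2.1 i) ^ (a j i)) →
      y e' = tropMap (nuTriv k) c a (y e)}


namespace Stmt10Aux


variable {A : Type} [CommRing A]

/-- A bounded nonarchimedean submultiplicative seminorm: a member of the poset in the
Berkovich-spectrum argument. -/
structure PreNorm (Q : A → ℝ) (p : A → ℝ) : Prop where
  nonneg : ∀ x, 0 ≤ p x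
  zero : p 0 = 0
  one : p 1 = 1
  mul_le : ∀ x y, p (x * y) ≤ p x * p y
  add_le : ∀ x y, p (x + y) ≤ max (p x) (p y)
  le : ∀ x, p x ≤ Q x

namespace PreNorm

variable {Q p : A → ℝ}

lemma add_le' (hp : PreNorm Q p) (x y : A) : p (x + y) ≤ p x + p y :=
  (hp.add_le x y).trans (max_le (by linarith [hp.nonneg y]) (by linarith [hp.nonneg x]))

lemma pow_le (hp : PreNorm Q p) (x : A) : ∀ n : ℕ, p (x ^ n) ≤ p x ^ n
  | 0 => by simp [pow_zero, hp.one]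
  | n + 1 => by
      rw [pow_succ, pow_succ]
      exact (hp.mul_le _ _).trans (mul_le_mul_of_nonneg_right (hp.pow_le x n) (hp.nonneg x))

lemma nsmul_le (hp : PreNorm Q p) (x : A) : ∀ n : ℕ, p (n • x) ≤ p x
  | 0 => by simpa [hp.zero] using hp.nonneg x
  | n + 1 => by
      rw [succ_nsmul]
      exact (hp.add_le _ _).trans (max_le (hp.nsmul_le x n) le_rfl)

lemma natCast_mul_le (hp : PreNorm Q p) (n : ℕ) (x : A) : p ((n : A) * x) ≤ p x := by
  have : (n : A) * x = n • x := by rw [nsmul_eq_mul]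
  rw [this]; exact hp.nsmul_le x n

lemma sum_le (hp : PreNorm Q p) {ι : Type*} (s : Finset ι) (f : ι → A) :
    p (∑ i ∈ s, f i) ≤ ∑ i ∈ s, p (f i) := by
  classical
  induction s using Finset.induction_on with
  | empty => simp [hp.zero]
  | insert _ _ hni ih =>
      rename_i a s
      rw [Finset.sum_insert hni, Finset.sum_insert hni]
      exact (hp.add_le' _ _).trans (by linarith)

lemma binom (hp : PreNorm Q p) (x y : A) (n : ℕ) :
    p ((x + y) ^ n) ≤ ∑ i ∈ Finset.range (n + 1), p (x ^ i) * p (y ^ (n - i)) := by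
  rw [add_pow]
  refine (hp.sum_le _ _).trans (Finset.sum_le_sum fun i _ => ?_)
  calc p (x ^ i * y ^ (n - i) * (n.choose i : A))
      = p ((n.choose i : A) * (x ^ i * y ^ (n - i))) := by ring_nf
    _ ≤ p (x ^ i * y ^ (n - i)) := hp.natCast_mul_le _ _
    _ ≤ p (x ^ i) * p (y ^ (n - i)) := hp.mul_le _ _

end PreNorm


def rt (p : A → ℝ) (k : ℕ) (x : A) : ℝ := (p (x ^ 2 ^ k)) ^ (((2 ^ k : ℕ) : ℝ))⁻¹

def sr (p : A → ℝ) (x : A) : ℝ := ⨅ k : ℕ, rt p k x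

variable {Q p : A → ℝ}

lemma rt_nonneg (hp : PreNorm Q p) (k : ℕ) (x : A) : 0 ≤ rt p k x :=
  Real.rpow_nonneg (hp.nonneg _) _

lemma two_pow_ne (k : ℕ) : (2 ^ k : ℕ) ≠ 0 := by positivity

lemma rt_pow (hp : PreNorm Q p) (k : ℕ) (x : A) :
    rt p k x ^ (2 ^ k : ℕ) = p (x ^ 2 ^ k) :=
  Real.rpow_inv_natCast_pow (hp.nonneg _) (two_pow_ne k)

lemma rt_antitone (hp : PreNorm Q p) (x : A) (k : ℕ) : rt p (k + 1) x ≤ rt p k x := by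
  have hb : 0 ≤ p (x ^ 2 ^ k) := hp.nonneg _
  have hab : p (x ^ 2 ^ (k + 1)) ≤ (p (x ^ 2 ^ k)) ^ (2 : ℕ) := by
    have : x ^ 2 ^ (k + 1) = (x ^ 2 ^ k) ^ (2 : ℕ) := by
      rw [← pow_mul]; ring_nf
    rw [this]
    exact hp.pow_le _ 2
  have h1 : rt p (k+1) x ≤ ((p (x ^ 2 ^ k)) ^ (2:ℕ)) ^ (((2 ^ (k+1) : ℕ) : ℝ))⁻¹ :=
    Real.rpow_le_rpow (hp.nonneg _) hab (by positivity)
  refine h1.trans_eq ?_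
  rw [← Real.rpow_natCast (p (x ^ 2 ^ k)) 2, ← Real.rpow_mul hb]
  unfold rt
  congr 1
  have : ((2:ℕ) : ℝ) ≠ 0 := by norm_num
  push_cast
  rw [pow_succ]
  field_simp

lemma rt_anti (hp : PreNorm Q p) (x : A) : Antitone (fun k => rt p k x) :=
  antitone_nat_of_succ_le (fun k => rt_antitone hp x k)

lemma rt_bdd (hp : PreNorm Q p) (x : A) : BddBelow (Set.range fun k => rt p k x) :=
  ⟨0, by rintro r ⟨k, rfl⟩; exact rt_nonneg hp k x⟩

lemma sr_le_rt (hp : PreNorm Q p) (k : ℕ) (x : A) : sr p x ≤ rt p k x :=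
  ciInf_le (rt_bdd hp x) k

lemma sr_nonneg (hp : PreNorm Q p) (x : A) : 0 ≤ sr p x :=
  le_ciInf fun k => rt_nonneg hp k x

lemma rt_zero_idx (hp : PreNorm Q p) (x : A) : rt p 0 x = p x := by
  unfold rt
  norm_num

lemma sr_le_self (hp : PreNorm Q p) (x : A) : sr p x ≤ p x := by
  have := sr_le_rt hp 0 x
  rwa [rt_zero_idx hp] at this

lemma sr_zero (hp : PreNorm Q p) : sr p 0 = 0 := by
  have h : ∀ k, rt p k (0 : A) = 0 := by
    intro k
    unfold rt
    rw [zero_pow (two_pow_ne k), hp.zero, Real.zero_rpow]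
    simp [two_pow_ne k]
  unfold sr
  simp only [h]
  exact ciInf_const

lemma sr_one (hp : PreNorm Q p) : sr p 1 = 1 := by
  have h : ∀ k, rt p k (1 : A) = 1 := by
    intro k
    unfold rt
    rw [one_pow, hp.one, Real.one_rpow]
  unfold sr
  simp only [h]
  exact ciInf_const

lemma sr_pow2_le (hp : PreNorm Q p) (k : ℕ) (x : A) :
    sr p x ^ (2 ^ k : ℕ) ≤ p (x ^ 2 ^ k) := by
  have := pow_le_pow_left₀ (sr_nonneg hp x) (sr_le_rt hp k x) (2 ^ k)
  rwa [rt_pow hp] at this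

lemma sr_exists_K (hp : PreNorm Q p) (x : A) {ε : ℝ} (hε : 0 < ε) :
    ∃ K : ℕ, p (x ^ 2 ^ K) ≤ (sr p x + ε) ^ (2 ^ K : ℕ) := by
  have hlt : (⨅ k : ℕ, rt p k x) < sr p x + ε := by
    have : sr p x < sr p x + ε := by linarith
    exact this
  obtain ⟨K, hK⟩ := exists_lt_of_ciInf_lt hlt
  refine ⟨K, ?_⟩
  have := pow_le_pow_left₀ (rt_nonneg hp K x) hK.le (2 ^ K)
  rwa [rt_pow hp] at this

/-- Eventual/basal bound: `p (x^n) ≤ C (sr x + ε)^n` for all `n`. -/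
lemma sr_EB (hp : PreNorm Q p) (x : A) {ε : ℝ} (hε : 0 < ε) :
    ∃ C : ℝ, 1 ≤ C ∧ ∀ n : ℕ, p (x ^ n) ≤ C * (sr p x + ε) ^ n := by
  set e := sr p x + ε with he
  have he0 : 0 < e := by have := sr_nonneg hp x; linarith
  obtain ⟨K, hK⟩ := sr_exists_K hp x hε
  set T := 2 ^ K with hT
  have hT0 : 0 < T := Nat.pow_pos (by norm_num)
  set C := 1 + ∑ i ∈ Finset.range T, p (x ^ i) / e ^ i with hC
  have hC1 : 1 ≤ C := by
    have h0 : 0 ≤ ∑ i ∈ Finset.range T, p (x ^ i) / e ^ i :=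
      Finset.sum_nonneg fun i _ => div_nonneg (hp.nonneg _) (by positivity)
    rw [hC]; linarith
  refine ⟨C, hC1, ?_⟩
  intro n
  induction n using Nat.strong_induction_on with
  | _ n ih =>
    by_cases hn : n < T
    · have hmem : n ∈ Finset.range T := Finset.mem_range.mpr hn
      have h1 : p (x ^ n) / e ^ n ≤ ∑ i ∈ Finset.range T, p (x ^ i) / e ^ i :=
        Finset.single_le_sum (f := fun i => p (x ^ i) / e ^ i)
          (fun i _ => div_nonneg (hp.nonneg _) (by positivity)) hmem
      have h2 : p (x ^ n) / e ^ n ≤ C := by rw [hC]; linarith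
      calc p (x ^ n) = (p (x ^ n) / e ^ n) * e ^ n := by field_simp
        _ ≤ C * e ^ n := mul_le_mul_of_nonneg_right h2 (by positivity)
    · push_neg at hn
      have hsplit : x ^ n = x ^ T * x ^ (n - T) := by
        rw [← pow_add]; congr 1; omega
      have hlt : n - T < n := by omega
      calc p (x ^ n) ≤ p (x ^ T) * p (x ^ (n - T)) := by rw [hsplit]; exact hp.mul_le _ _
        _ ≤ e ^ T * (C * e ^ (n - T)) := by
            apply mul_le_mul hK (ih _ hlt) (hp.nonneg _) (by positivity)
        _ = C * e ^ n := by
            rw [← mul_assoc, mul_comm (e ^ T) C, mul_assoc, ← pow_add]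
            congr 2
            omega

lemma le_of_forall_eps_mul {X Y M : ℝ} (hM : 0 ≤ M)
    (h : ∀ ε : ℝ, 0 < ε → ε ≤ 1 → X ≤ Y + ε * M) : X ≤ Y := by
  by_contra hc
  push_neg at hc
  have hXY : 0 < X - Y := by linarith
  set ε := min 1 ((X - Y) / (2 * (M + 1))) with hε
  have hMpos : 0 < 2 * (M + 1) := by linarith
  have hε0 : 0 < ε := lt_min one_pos (div_pos hXY hMpos)
  have hε1 : ε ≤ 1 := min_le_left _ _
  have h2 : ε ≤ (X - Y) / (2 * (M + 1)) := min_le_right _ _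
  have := h ε hε0 hε1
  have hεM : ε * M ≤ (X - Y) / 2 := by
    have h3 : ε * (M + 1) ≤ (X - Y) / (2 * (M + 1)) * (M + 1) :=
      mul_le_mul_of_nonneg_right h2 (by linarith)
    have heq : (X - Y) / (2 * (M + 1)) * (M + 1) = (X - Y) / 2 := by
      field_simp
    nlinarith [hε0.le]
  linarith

lemma pow_beats_linear {d B : ℝ} (hd : 0 < d) (hB : 0 ≤ B) :
    ∃ N₀ : ℕ, ∀ N : ℕ, N₀ ≤ N → B * (N + 1) < (1 + d) ^ N := by
  obtain ⟨n₁, hn₁⟩ := exists_nat_gt (8 * (B + 1) / (d * d))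
  refine ⟨max 2 (n₁ + 1), fun N hN => ?_⟩
  have hN2 : 2 ≤ N := le_trans (le_max_left _ _) hN
  have hNn₁ : (8 * (B + 1) / (d * d)) < N := by
    have h4 : (n₁ : ℝ) < N := by
      have : n₁ + 1 ≤ N := le_trans (le_max_right _ _) hN
      exact_mod_cast Nat.lt_of_succ_le this
    linarith
  have hbin : (N.choose 2 : ℝ) * (d * d) ≤ (1 + d) ^ N := by
    have hexp : (d + 1) ^ N = ∑ k ∈ Finset.range (N + 1), d ^ k * 1 ^ (N - k) * (N.choose k) :=
      add_pow d 1 N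
    have hmem : 2 ∈ Finset.range (N + 1) := Finset.mem_range.mpr (by omega)
    have hterm : d ^ 2 * 1 ^ (N - 2) * (N.choose 2 : ℝ) ≤ (d + 1) ^ N := by
      rw [hexp]
      exact Finset.single_le_sum (f := fun k => d ^ k * 1 ^ (N - k) * (N.choose k : ℝ))
        (fun i _ => by positivity) hmem
    have heq2 : d ^ 2 * 1 ^ (N - 2) * (N.choose 2 : ℝ) = (N.choose 2 : ℝ) * (d * d) := by
      rw [one_pow]; ring
    rw [heq2] at hterm
    calc (N.choose 2 : ℝ) * (d * d) ≤ (d + 1) ^ N := hterm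
      _ = (1 + d) ^ N := by rw [add_comm]
  have hch : ((N : ℝ) * ((N : ℝ) - 1)) / 2 = (N.choose 2 : ℝ) := (Nat.cast_choose_two (K := ℝ) N).symm
  have hNR : (2 : ℝ) ≤ (N : ℝ) := by exact_mod_cast hN2
  have key : B * (N + 1) < ((N : ℝ) * ((N : ℝ) - 1)) / 2 * (d * d) := by
    have h1 : B * ((N : ℝ) + 1) ≤ (B + 1) * (2 * N) := by nlinarith
    have h3 : 8 * (B + 1) < (N : ℝ) * (d * d) := by
      rw [div_lt_iff₀ (by positivity)] at hNn₁
      linarith [hNn₁]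
    nlinarith
  calc B * (N + 1) < ((N : ℝ) * ((N : ℝ) - 1)) / 2 * (d * d) := key
    _ = (N.choose 2 : ℝ) * (d * d) := by rw [hch]
    _ ≤ (1 + d) ^ N := hbin

/-- There is a 2-power `N = 2^k` with `C * (N + 1) ≤ (1+δ)^N`. -/
lemma exists_two_pow_bound {C δ : ℝ} (hC : 0 ≤ C) (hδ : 0 < δ) :
    ∃ k : ℕ, C * (((2 ^ k : ℕ) : ℝ) + 1) ≤ (1 + δ) ^ (2 ^ k : ℕ) := by
  obtain ⟨N₀, hN₀⟩ := pow_beats_linear hδ hC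
  exact ⟨N₀, (hN₀ (2 ^ N₀) (Nat.lt_two_pow_self (n := N₀)).le).le⟩

/-- Peel a nonnegative constant out of a `2^k`-th root. -/
lemma rpow_peel {C b : ℝ} (hC : 0 ≤ C) (hb : 0 ≤ b) (k : ℕ) :
    (C * b ^ (2 ^ k : ℕ)) ^ (((2 ^ k : ℕ) : ℝ))⁻¹ = C ^ (((2 ^ k : ℕ) : ℝ))⁻¹ * b := by
  rw [Real.mul_rpow hC (by positivity), Real.pow_rpow_inv_natCast hb (two_pow_ne k)]

lemma rpow_const_le {C δ : ℝ} (hC : 0 ≤ C) (hδ : 0 < δ) (k : ℕ)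
    (h : C ≤ (1 + δ) ^ (2 ^ k : ℕ)) : C ^ (((2 ^ k : ℕ) : ℝ))⁻¹ ≤ 1 + δ := by
  have h1 : C ^ (((2 ^ k : ℕ) : ℝ))⁻¹ ≤ ((1 + δ) ^ (2 ^ k : ℕ)) ^ (((2 ^ k : ℕ) : ℝ))⁻¹ :=
    Real.rpow_le_rpow hC h (by positivity)
  rwa [Real.pow_rpow_inv_natCast (by linarith) (two_pow_ne k)] at h1

lemma sr_mul_le (hp : PreNorm Q p) (x y : A) : sr p (x * y) ≤ sr p x * sr p y := by
  have hx0 := sr_nonneg hp x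
  have hy0 := sr_nonneg hp y
  set a := sr p x
  set b := sr p y
  have key : ∀ ε : ℝ, 0 < ε → sr p (x * y) ≤ (1 + ε) * ((a + ε) * (b + ε)) := by
    intro ε hε
    obtain ⟨Cx, hCx1, hCx⟩ := sr_EB hp x hε
    obtain ⟨Cy, hCy1, hCy⟩ := sr_EB hp y hε
    have hCC : 0 ≤ Cx * Cy := by nlinarith
    obtain ⟨k, hk⟩ := exists_two_pow_bound hCC hε
    have hk' : Cx * Cy ≤ (1 + ε) ^ (2 ^ k : ℕ) := by
      have : Cx * Cy ≤ Cx * Cy * (((2 ^ k : ℕ) : ℝ) + 1) := by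
        nlinarith [Nat.cast_nonneg (α := ℝ) (2 ^ k)]
      linarith
    have hbound : p ((x * y) ^ 2 ^ k) ≤ (Cx * Cy) * ((a + ε) * (b + ε)) ^ (2 ^ k : ℕ) := by
      have : (x * y) ^ 2 ^ k = x ^ 2 ^ k * y ^ 2 ^ k := mul_pow x y _
      rw [this, mul_pow]
      calc p (x ^ 2 ^ k * y ^ 2 ^ k) ≤ p (x ^ 2 ^ k) * p (y ^ 2 ^ k) := hp.mul_le _ _
        _ ≤ (Cx * (a + ε) ^ (2 ^ k)) * (Cy * (b + ε) ^ (2 ^ k)) :=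
            mul_le_mul (hCx _) (hCy _) (hp.nonneg _) (by positivity)
        _ = Cx * Cy * ((a + ε) ^ 2 ^ k * (b + ε) ^ 2 ^ k) := by ring
    have h1 : sr p (x * y) ≤ rt p k (x * y) := sr_le_rt hp k _
    have h2 : rt p k (x * y) ≤
        ((Cx * Cy) * ((a + ε) * (b + ε)) ^ (2 ^ k : ℕ)) ^ (((2 ^ k : ℕ) : ℝ))⁻¹ := by
      unfold rt
      exact Real.rpow_le_rpow (hp.nonneg _) hbound (by positivity)
    rw [rpow_peel hCC (by positivity) k] at h2
    have h3 : (Cx * Cy) ^ (((2 ^ k : ℕ) : ℝ))⁻¹ ≤ 1 + ε := rpow_const_le hCC hε k hk'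
    calc sr p (x * y) ≤ (Cx * Cy) ^ (((2 ^ k : ℕ) : ℝ))⁻¹ * ((a + ε) * (b + ε)) :=
          h1.trans h2
      _ ≤ (1 + ε) * ((a + ε) * (b + ε)) := by
          apply mul_le_mul_of_nonneg_right h3 (by positivity)
  set M := (a + b + 1) + (a + 1) * (b + 1) with hM
  have hM0 : 0 ≤ M := by nlinarith
  apply le_of_forall_eps_mul hM0
  intro ε hε0 hε1
  have h := key ε hε0
  have e1 : (a + ε) * (b + ε) ≤ a * b + ε * (a + b + 1) := by nlinarith
  have e2 : (a + ε) * (b + ε) ≤ (a + 1) * (b + 1) := by nlinarith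
  have hexpand : (1 + ε) * ((a + ε) * (b + ε)) ≤ a * b + ε * M := by
    have e3 : ε * ((a + ε) * (b + ε)) ≤ ε * ((a + 1) * (b + 1)) :=
      mul_le_mul_of_nonneg_left e2 hε0.le
    calc (1 + ε) * ((a + ε) * (b + ε)) = (a + ε) * (b + ε) + ε * ((a + ε) * (b + ε)) := by ring
      _ ≤ (a * b + ε * (a + b + 1)) + ε * ((a + 1) * (b + 1)) := by linarith
      _ = a * b + ε * M := by rw [hM]; ring
  linarith

lemma sr_add_le (hp : PreNorm Q p) (x y : A) : sr p (x + y) ≤ max (sr p x) (sr p y) := by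
  have hx0 := sr_nonneg hp x
  have hy0 := sr_nonneg hp y
  set a := sr p x
  set b := sr p y
  set M := max a b with hMdef
  have hM0 : 0 ≤ M := le_trans hx0 (le_max_left _ _)
  have key : ∀ ε : ℝ, 0 < ε → sr p (x + y) ≤ (1 + ε) * (M + ε) := by
    intro ε hε
    obtain ⟨Cx, hCx1, hCx⟩ := sr_EB hp x hε
    obtain ⟨Cy, hCy1, hCy⟩ := sr_EB hp y hε
    have hCC : 0 ≤ Cx * Cy := by nlinarith
    obtain ⟨k, hk⟩ := exists_two_pow_bound hCC hε
    have haM : a + ε ≤ M + ε := by have := le_max_left a b; linarith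
    have hbM : b + ε ≤ M + ε := by have := le_max_right a b; linarith
    have hbound : ∀ n : ℕ, p ((x + y) ^ n) ≤ (Cx * Cy * (n + 1)) * (M + ε) ^ n := by
      intro n
      have h1 : p ((x + y) ^ n) ≤ ∑ i ∈ Finset.range (n + 1), p (x ^ i) * p (y ^ (n - i)) :=
        hp.binom x y n
      have h2 : ∀ i ∈ Finset.range (n + 1),
          p (x ^ i) * p (y ^ (n - i)) ≤ Cx * Cy * (M + ε) ^ n := by
        intro i hi
        have hin : i ≤ n := Nat.lt_succ_iff.mp (Finset.mem_range.mp hi)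
        calc p (x ^ i) * p (y ^ (n - i))
            ≤ (Cx * (a + ε) ^ i) * (Cy * (b + ε) ^ (n - i)) :=
              mul_le_mul (hCx i) (hCy (n - i)) (hp.nonneg _) (by positivity)
          _ ≤ (Cx * (M + ε) ^ i) * (Cy * (M + ε) ^ (n - i)) := by
              apply mul_le_mul
              · exact mul_le_mul_of_nonneg_left
                  (pow_le_pow_left₀ (by linarith) haM i) (by linarith)
              · exact mul_le_mul_of_nonneg_left
                  (pow_le_pow_left₀ (by linarith) hbM (n - i)) (by linarith)
              · positivity
              · positivity
          _ = Cx * Cy * ((M + ε) ^ i * (M + ε) ^ (n - i)) := by ring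
          _ = Cx * Cy * (M + ε) ^ n := by rw [← pow_add]; congr 2; omega
      have h3 : ∑ i ∈ Finset.range (n + 1), p (x ^ i) * p (y ^ (n - i))
          ≤ (n + 1) * (Cx * Cy * (M + ε) ^ n) := by
        have := Finset.sum_le_card_nsmul (Finset.range (n + 1))
          (fun i => p (x ^ i) * p (y ^ (n - i))) (Cx * Cy * (M + ε) ^ n) h2
        simpa [Finset.card_range, nsmul_eq_mul] using this
      calc p ((x + y) ^ n) ≤ (n + 1) * (Cx * Cy * (M + ε) ^ n) := h1.trans h3
        _ = (Cx * Cy * (n + 1)) * (M + ε) ^ n := by ring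
    have h1 : sr p (x + y) ≤ rt p k (x + y) := sr_le_rt hp k _
    have hC2 : (0:ℝ) ≤ Cx * Cy * (((2 ^ k : ℕ) : ℝ) + 1) := by positivity
    have h2 : rt p k (x + y) ≤
        ((Cx * Cy * (((2 ^ k : ℕ) : ℝ) + 1)) * (M + ε) ^ (2 ^ k : ℕ)) ^ (((2 ^ k : ℕ) : ℝ))⁻¹ := by
      unfold rt
      apply Real.rpow_le_rpow (hp.nonneg _) ?_ (by positivity)
      have := hbound (2 ^ k)
      calc p ((x + y) ^ 2 ^ k) ≤ (Cx * Cy * ((2 ^ k : ℕ) + 1)) * (M + ε) ^ (2 ^ k : ℕ) := by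
            exact_mod_cast this
        _ = (Cx * Cy * (((2 ^ k : ℕ) : ℝ) + 1)) * (M + ε) ^ (2 ^ k : ℕ) := by norm_cast
    rw [rpow_peel hC2 (by positivity) k] at h2
    have hmul : Cx * Cy * (((2 ^ k : ℕ) : ℝ) + 1) ≤ (1 + ε) ^ (2 ^ k : ℕ) := hk
    have h3 : (Cx * Cy * (((2 ^ k : ℕ) : ℝ) + 1)) ^ (((2 ^ k : ℕ) : ℝ))⁻¹ ≤ 1 + ε :=
      rpow_const_le hC2 hε k hmul
    calc sr p (x + y) ≤ (Cx * Cy * (((2 ^ k : ℕ) : ℝ) + 1)) ^ (((2 ^ k : ℕ) : ℝ))⁻¹ * (M + ε) :=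
          h1.trans h2
      _ ≤ (1 + ε) * (M + ε) := mul_le_mul_of_nonneg_right h3 (by linarith)
  apply le_of_forall_eps_mul (M := M + 2) (by linarith)
  intro ε hε0 hε1
  have h := key ε hε0
  nlinarith

theorem sr_prenorm (hp : PreNorm Q p) : PreNorm Q (sr p) where
  nonneg := sr_nonneg hp
  zero := sr_zero hp
  one := sr_one hp
  mul_le := sr_mul_le hp
  add_le := sr_add_le hp
  le := fun x => (sr_le_self hp x).trans (hp.le x)


/-! ### Zorn: a minimal PreNorm exists -/

theorem exists_minimal_prenorm {Q : A → ℝ} (hQ : PreNorm Q Q) :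
    ∃ p : A → ℝ, PreNorm Q p ∧
      ∀ q : A → ℝ, PreNorm Q q → (∀ x, q x ≤ p x) → (∀ x, p x ≤ q x) := by
  set s : Set ((A → ℝ)ᵒᵈ) := {p | PreNorm Q (OrderDual.ofDual p)} with hs
  have hzorn : ∃ m, Maximal (· ∈ s) m := by
    apply zorn_le₀ s
    intro c hcs hchain
    rcases c.eq_empty_or_nonempty with rfl | hne
    · exact ⟨OrderDual.toDual Q, hQ, fun z hz => hz.elim⟩
    · set g : A → ℝ := fun x => sInf ((fun (p : (A → ℝ)ᵒᵈ) => OrderDual.ofDual p x) '' c) with hg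
      have hnex : ∀ x : A, ((fun (p : (A → ℝ)ᵒᵈ) => OrderDual.ofDual p x) '' c).Nonempty :=
        fun x => hne.image _
      have hbdd : ∀ x : A, BddBelow ((fun (p : (A → ℝ)ᵒᵈ) => OrderDual.ofDual p x) '' c) := by
        intro x
        refine ⟨0, ?_⟩
        rintro r ⟨q, hq, rfl⟩
        exact (hcs hq).nonneg x
      have hgle : ∀ q ∈ c, ∀ x, g x ≤ OrderDual.ofDual q x := by
        intro q hq x
        exact csInf_le (hbdd x) ⟨q, hq, rfl⟩
      have hgnonneg : ∀ x, 0 ≤ g x := by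
        intro x
        apply Real.sInf_nonneg
        rintro r ⟨q, hq, rfl⟩
        exact (hcs hq).nonneg x
      have happrox : ∀ x : A, ∀ ε : ℝ, 0 < ε → ∃ q ∈ c, OrderDual.ofDual q x < g x + ε := by
        intro x ε hε
        obtain ⟨r, ⟨q, hq, rfl⟩, hr⟩ := Real.lt_sInf_add_pos (hnex x) hε
        exact ⟨q, hq, hr⟩
      -- pairs of points: find a common smaller element of the chain
      have hcommon : ∀ x y : A, ∀ ε : ℝ, 0 < ε → ∃ q ∈ c,
          OrderDual.ofDual q x < g x + ε ∧ OrderDual.ofDual q y < g y + ε := by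
        intro x y ε hε
        obtain ⟨q₁, hq₁, h1⟩ := happrox x ε hε
        obtain ⟨q₂, hq₂, h2⟩ := happrox y ε hε
        rcases eq_or_ne q₁ q₂ with rfl | hneq
        · exact ⟨q₁, hq₁, h1, h2⟩
        rcases hchain hq₁ hq₂ hneq with hle | hle
        · -- q₁ ≤ q₂ in dual, i.e. ofDual q₂ ≤ ofDual q₁
          refine ⟨q₂, hq₂, lt_of_le_of_lt ?_ h1, h2⟩
          exact hle x
        · refine ⟨q₁, hq₁, h1, lt_of_le_of_lt ?_ h2⟩
          exact hle y
      have hgpre : PreNorm Q g := by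
        constructor
        · exact hgnonneg
        · obtain ⟨q, hq⟩ := hne
          have h1 : g 0 ≤ OrderDual.ofDual q 0 := hgle q hq 0
          rw [(hcs hq).zero] at h1
          exact le_antisymm h1 (hgnonneg 0)
        · obtain ⟨q, hq⟩ := hne
          have h1 : g 1 ≤ OrderDual.ofDual q 1 := hgle q hq 1
          rw [(hcs hq).one] at h1
          refine le_antisymm h1 ?_
          apply le_csInf (hnex 1)
          rintro r ⟨q', hq', rfl⟩
          simp only []
          rw [(hcs hq').one]
        · intro x y
          apply le_of_forall_eps_mul (M := g x + g y + 1)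
            (by have := hgnonneg x; have := hgnonneg y; linarith)
          intro ε hε0 hε1
          obtain ⟨q, hq, h1, h2⟩ := hcommon x y ε hε0
          have hqx0 : 0 ≤ OrderDual.ofDual q x := (hcs hq).nonneg x
          have hqy0 : 0 ≤ OrderDual.ofDual q y := (hcs hq).nonneg y
          calc g (x * y) ≤ OrderDual.ofDual q (x * y) := hgle q hq _
            _ ≤ OrderDual.ofDual q x * OrderDual.ofDual q y := (hcs hq).mul_le x y
            _ ≤ (g x + ε) * (g y + ε) := by
                apply mul_le_mul h1.le h2.le hqy0 (by have := hgnonneg x; linarith)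
            _ ≤ g x * g y + ε * (g x + g y + 1) := by nlinarith [hgnonneg x, hgnonneg y]
        · intro x y
          apply le_of_forall_eps_mul (M := 1) one_pos.le
          intro ε hε0 hε1
          obtain ⟨q, hq, h1, h2⟩ := hcommon x y ε hε0
          calc g (x + y) ≤ OrderDual.ofDual q (x + y) := hgle q hq _
            _ ≤ max (OrderDual.ofDual q x) (OrderDual.ofDual q y) := (hcs hq).add_le x y
            _ ≤ max (g x + ε) (g y + ε) := max_le_max h1.le h2.le
            _ ≤ max (g x) (g y) + ε * 1 := by
                rw [mul_one]
                exact max_le (by simp [le_max_left (g x) (g y)])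
                  (by simp [le_max_right (g x) (g y)])
        · intro x
          obtain ⟨q, hq⟩ := hne
          exact (hgle q hq x).trans ((hcs hq).le x)
      refine ⟨OrderDual.toDual g, hgpre, ?_⟩
      intro z hz
      intro x
      exact hgle z hz x
  obtain ⟨m, hm⟩ := hzorn
  refine ⟨OrderDual.ofDual m, hm.prop, ?_⟩
  intro q hq hqm x
  have h1 : m ≤ OrderDual.toDual q := fun z => hqm z
  exact hm.le_of_ge hq h1 x

/-! ### The localization seminorm p_y and multiplicativity of minimal elements -/

lemma le_mul_ciInf {k : ℝ} (hk : 0 ≤ k) {c : ℕ → ℝ} (hc : ∀ n, 0 ≤ c n) {aa : ℝ}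
    (h : ∀ n, aa ≤ k * c n) : aa ≤ k * ⨅ n, c n := by
  rcases hk.eq_or_lt with rfl | hkpos
  · simpa using h 0
  · have hbdd : BddBelow (Set.range c) := ⟨0, by rintro r ⟨n, rfl⟩; exact hc n⟩
    have h2 : ∀ n, aa / k ≤ c n := fun n => (div_le_iff₀' hkpos).mpr (h n)
    have h3 : aa / k ≤ ⨅ n, c n := le_ciInf h2
    calc aa = k * (aa / k) := by field_simp
      _ ≤ k * ⨅ n, c n := mul_le_mul_of_nonneg_left h3 hkpos.le

def py (p : A → ℝ) (y : A) (x : A) : ℝ := ⨅ n : ℕ, p (x * y ^ n) / p y ^ n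

section py

variable (hp : PreNorm Q p)

lemma py_term_nonneg (hp : PreNorm Q p) (y x : A) (n : ℕ) : 0 ≤ p (x * y ^ n) / p y ^ n :=
  div_nonneg (hp.nonneg _) (pow_nonneg (hp.nonneg y) n)

lemma py_bdd (hp : PreNorm Q p) (y x : A) :
    BddBelow (Set.range fun n => p (x * y ^ n) / p y ^ n) :=
  ⟨0, by rintro r ⟨n, rfl⟩; exact py_term_nonneg hp y x n⟩

lemma py_le_term (hp : PreNorm Q p) (y x : A) (n : ℕ) :
    py p y x ≤ p (x * y ^ n) / p y ^ n :=
  ciInf_le (py_bdd hp y x) n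

lemma py_nonneg (hp : PreNorm Q p) (y x : A) : 0 ≤ py p y x :=
  le_ciInf fun n => py_term_nonneg hp y x n

lemma py_term_anti (hp : PreNorm Q p) {y : A} (hy : 0 < p y) (x : A) :
    Antitone (fun n => p (x * y ^ n) / p y ^ n) := by
  apply antitone_nat_of_succ_le
  intro n
  have h1 : p (x * y ^ (n + 1)) ≤ p (x * y ^ n) * p y := by
    rw [pow_succ, ← mul_assoc]
    exact hp.mul_le _ _
  rw [div_le_div_iff₀ (by positivity) (by positivity)]
  have hpn : 0 < p y ^ n := pow_pos hy n
  have hps : p y ^ (n + 1) = p y ^ n * p y := pow_succ _ _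
  nlinarith [hp.nonneg (x * y ^ n)]

lemma py_le_self (hp : PreNorm Q p) (y x : A) : py p y x ≤ p x := by
  have := py_le_term hp y x 0
  simpa using this

lemma py_approx (hp : PreNorm Q p) (y x : A) {ε : ℝ} (hε : 0 < ε) :
    ∃ n, p (x * y ^ n) / p y ^ n < py p y x + ε := by
  have : (⨅ n : ℕ, p (x * y ^ n) / p y ^ n) < py p y x + ε := by
    have : py p y x < py p y x + ε := by linarith
    exact this
  exact exists_lt_of_ciInf_lt this

lemma py_prenorm (hp : PreNorm Q p) {y : A} (hy : 0 < p y)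
    (hpow : ∀ n : ℕ, p y ^ n ≤ p (y ^ n)) : PreNorm Q (py p y) := by
  constructor
  · exact py_nonneg hp y
  · have h0 : ∀ n : ℕ, p ((0 : A) * y ^ n) / p y ^ n = 0 := by
      intro n
      rw [zero_mul, hp.zero, zero_div]
    unfold py
    simp only [h0]
    exact ciInf_const
  · have hone : ∀ n : ℕ, 1 ≤ p ((1 : A) * y ^ n) / p y ^ n := by
      intro n
      rw [one_mul]
      rw [le_div_iff₀ (pow_pos hy n)]
      rw [one_mul]
      exact hpow n
    refine le_antisymm ?_ (le_ciInf hone)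
    have := py_le_term hp y 1 0
    simpa [hp.one] using this
  · intro x x'
    have key : ∀ n m : ℕ, py p y (x * x') ≤
        (p (x * y ^ n) / p y ^ n) * (p (x' * y ^ m) / p y ^ m) := by
      intro n m
      have h1 : py p y (x * x') ≤ p ((x * x') * y ^ (n + m)) / p y ^ (n + m) :=
        py_le_term hp y _ _
      have h2 : p ((x * x') * y ^ (n + m)) ≤ p (x * y ^ n) * p (x' * y ^ m) := by
        have : (x * x') * y ^ (n + m) = (x * y ^ n) * (x' * y ^ m) := by
          rw [pow_add]; ring
        rw [this]
        exact hp.mul_le _ _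
      have h3 : p ((x * x') * y ^ (n + m)) / p y ^ (n + m)
          ≤ (p (x * y ^ n) * p (x' * y ^ m)) / (p y ^ n * p y ^ m) := by
        rw [show p y ^ (n + m) = p y ^ n * p y ^ m from pow_add _ _ _]
        exact (div_le_div_iff_of_pos_right (by positivity)).mpr h2
      calc py p y (x * x') ≤ p ((x * x') * y ^ (n + m)) / p y ^ (n + m) := h1
        _ ≤ (p (x * y ^ n) * p (x' * y ^ m)) / (p y ^ n * p y ^ m) := h3
        _ = (p (x * y ^ n) / p y ^ n) * (p (x' * y ^ m) / p y ^ m) := by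
            field_simp
    -- take infima
    have step1 : ∀ n : ℕ, py p y (x * x') ≤ (p (x * y ^ n) / p y ^ n) * py p y x' := by
      intro n
      exact le_mul_ciInf (py_term_nonneg hp y x n) (py_term_nonneg hp y x') (key n)
    have step2 : py p y (x * x') ≤ py p y x * py p y x' := by
      have hcomm : ∀ n, py p y (x * x') ≤ py p y x' * (p (x * y ^ n) / p y ^ n) := by
        intro n
        exact (step1 n).trans_eq (mul_comm _ _)
      have := le_mul_ciInf (py_nonneg hp y x') (py_term_nonneg hp y x) hcomm
      calc py p y (x * x') ≤ py p y x' * ⨅ n, p (x * y ^ n) / p y ^ n := this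
        _ = py p y x * py p y x' := mul_comm _ _
    exact step2
  · intro x x'
    apply le_of_forall_eps_mul (M := 1) one_pos.le
    intro ε hε0 hε1
    obtain ⟨n₁, h1⟩ := py_approx hp y x hε0
    obtain ⟨n₂, h2⟩ := py_approx hp y x' hε0
    set n := max n₁ n₂
    have h1' : p (x * y ^ n) / p y ^ n ≤ py p y x + ε :=
      le_trans (py_term_anti hp hy x (le_max_left n₁ n₂)) h1.le
    have h2' : p (x' * y ^ n) / p y ^ n ≤ py p y x' + ε :=
      le_trans (py_term_anti hp hy x' (le_max_right n₁ n₂)) h2.le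
    have h3 : p ((x + x') * y ^ n) ≤ max (p (x * y ^ n)) (p (x' * y ^ n)) := by
      rw [add_mul]
      exact hp.add_le _ _
    have h4 : p ((x + x') * y ^ n) / p y ^ n
        ≤ max (p (x * y ^ n) / p y ^ n) (p (x' * y ^ n) / p y ^ n) := by
      rw [max_div_div_right (le_of_lt (pow_pos hy n))]
      exact (div_le_div_iff_of_pos_right (pow_pos hy n)).mpr h3
    calc py p y (x + x') ≤ p ((x + x') * y ^ n) / p y ^ n := py_le_term hp y _ n
      _ ≤ max (p (x * y ^ n) / p y ^ n) (p (x' * y ^ n) / p y ^ n) := h4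
      _ ≤ max (py p y x + ε) (py p y x' + ε) := max_le_max h1' h2'
      _ ≤ max (py p y x) (py p y x') + ε * 1 := by
          rw [mul_one]
          exact max_le (by simp [le_max_left (py p y x) (py p y x')])
            (by simp [le_max_right (py p y x) (py p y x')])
  · intro x
    exact (py_le_self hp y x).trans (hp.le x)

end py

/-- The main abstract theorem: below any bounded nonarchimedean submultiplicative
seminorm there is a multiplicative one. -/
theorem exists_mult_prenorm {Q : A → ℝ} (hQ : PreNorm Q Q) :
    ∃ p : A → ℝ, PreNorm Q p ∧ ∀ x y : A, p (x * y) = p x * p y := by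
  obtain ⟨p, hp, hmin⟩ := exists_minimal_prenorm hQ
  have hsr : ∀ x, p x ≤ sr p x :=
    hmin (sr p) (sr_prenorm hp) (fun x => sr_le_self hp x)
  have hpm : ∀ (x : A) (k : ℕ), p x ^ 2 ^ k ≤ p (x ^ 2 ^ k) := fun x k =>
    le_trans (pow_le_pow_left₀ (hp.nonneg x) (hsr x) _) (sr_pow2_le hp k x)
  have hpow : ∀ y : A, 0 < p y → ∀ n : ℕ, p y ^ n ≤ p (y ^ n) := by
    intro y hy n
    have hn2 : n ≤ 2 ^ n := (Nat.lt_two_pow_self (n := n)).le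
    have h1 : p y ^ 2 ^ n ≤ p (y ^ 2 ^ n) := hpm y n
    have hsplit : (y : A) ^ 2 ^ n = y ^ n * y ^ (2 ^ n - n) := by
      rw [← pow_add]; congr 1; omega
    have h2 : p (y ^ 2 ^ n) ≤ p (y ^ n) * p y ^ (2 ^ n - n) := by
      rw [hsplit]
      exact (hp.mul_le _ _).trans
        (mul_le_mul_of_nonneg_left (hp.pow_le y _) (hp.nonneg _))
    have h3 : p y ^ n * p y ^ (2 ^ n - n) ≤ p (y ^ n) * p y ^ (2 ^ n - n) := by
      calc p y ^ n * p y ^ (2 ^ n - n) = p y ^ 2 ^ n := by rw [← pow_add]; congr 1; omega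
        _ ≤ p (y ^ 2 ^ n) := h1
        _ ≤ p (y ^ n) * p y ^ (2 ^ n - n) := h2
    exact le_of_mul_le_mul_right h3 (pow_pos hy _)
  refine ⟨p, hp, ?_⟩
  intro x y
  rcases (hp.nonneg y).eq_or_lt with h0 | hy
  · have h1 : p (x * y) ≤ 0 := by
      have := hp.mul_le x y
      rw [← h0] at this
      simpa using this
    have h2 : p x * p y = 0 := by rw [← h0]; ring
    rw [h2]
    exact le_antisymm h1 (hp.nonneg _)
  · have hq := py_prenorm hp hy (hpow y hy)
    have hple : ∀ z, p z ≤ py p y z := hmin (py p y) hq (fun z => py_le_self hp y z)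
    have h1 : p x ≤ p (x * y) / p y := by
      have := (hple x).trans (py_le_term hp y x 1)
      simpa using this
    have h2 : p x * p y ≤ p (x * y) := by
      rw [← le_div_iff₀ hy]
      exact h1
    exact le_antisymm (hp.mul_le x y) h2


/-! ### Concrete construction on the torus -/

section Concrete

open Pointwise

variable {k : Type} [Field k] {m : ℕ}

/-- The weight `e^{-⟨u,v⟩}` of the monomial `x^u`. -/
def Wt (v : Fin m → ℝ) (u : Fin m → ℤ) : ℝ := Real.exp (-(∑ i, (u i : ℝ) * v i))

lemma Wt_pos (v : Fin m → ℝ) (u : Fin m → ℤ) : 0 < Wt v u := Real.exp_pos _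

lemma Wt_add (v : Fin m → ℝ) (u w : Fin m → ℤ) : Wt v (u + w) = Wt v u * Wt v w := by
  unfold Wt
  rw [← Real.exp_add]
  congr 1
  have h : (∑ i, (((u + w) i : ℤ) : ℝ) * v i)
      = (∑ i, (u i : ℝ) * v i) + (∑ i, (w i : ℝ) * v i) := by
    rw [← Finset.sum_add_distrib]
    apply Finset.sum_congr rfl
    intro i _
    have : ((u + w) i : ℤ) = u i + w i := rfl
    rw [this]
    push_cast
    ring
  rw [h]
  ring

lemma Wt_zero (v : Fin m → ℝ) : Wt v 0 = 1 := by
  unfold Wt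
  have : (∑ i, (((0 : Fin m → ℤ) i : ℤ) : ℝ) * v i) = 0 := by
    apply Finset.sum_eq_zero
    intro i _
    simp
  rw [this]
  simp

/-- The sup-norm with weights `e^{-⟨u,v⟩}` on Laurent polynomials. -/
def N0 (v : Fin m → ℝ) (g : Laur k m) : NNReal :=
  g.coeff.support.sup fun u => Real.toNNReal (Wt v u)

lemma le_N0 {v : Fin m → ℝ} {g : Laur k m} {u : Fin m → ℤ} (hu : u ∈ g.coeff.support) :
    Real.toNNReal (Wt v u) ≤ N0 v g := by
  unfold N0
  exact Finset.le_sup (f := fun u => Real.toNNReal (Wt v u)) hu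

lemma N0_zero (v : Fin m → ℝ) : N0 v (0 : Laur k m) = 0 := by
  unfold N0
  simp

lemma N0_single (v : Fin m → ℝ) (u : Fin m → ℤ) {a : k} (ha : a ≠ 0) :
    N0 v (AddMonoidAlgebra.single u a) = Real.toNNReal (Wt v u) := by
  unfold N0
  rw [AddMonoidAlgebra.coeff_single, Finsupp.support_single_ne_zero _ ha, Finset.sup_singleton]

lemma N0_one (v : Fin m → ℝ) : N0 v (1 : Laur k m) = 1 := by
  rw [AddMonoidAlgebra.one_def, N0_single v 0 (one_ne_zero : (1:k) ≠ 0), Wt_zero]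
  simp

lemma N0_add_le (v : Fin m → ℝ) (f g : Laur k m) :
    N0 v (f + g) ≤ max (N0 v f) (N0 v g) := by
  apply Finset.sup_le
  intro u hu
  rcases Finset.mem_union.mp (Finsupp.support_add hu) with h | h
  · exact le_trans (le_N0 h) (le_max_left _ _)
  · exact le_trans (le_N0 h) (le_max_right _ _)

lemma N0_mul_le (v : Fin m → ℝ) (f g : Laur k m) :
    N0 v (f * g) ≤ N0 v f * N0 v g := by
  apply Finset.sup_le
  intro u hu
  have hu2 := AddMonoidAlgebra.support_coeff_mul_subset f g hu
  rw [Finset.mem_add] at hu2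
  obtain ⟨a, ha, b, hb, rfl⟩ := hu2
  rw [Wt_add, Real.toNNReal_mul (Wt_pos v a).le]
  exact mul_le_mul' (le_N0 ha) (le_N0 hb)

/-- The quotient seminorm induced by `N0` on `k[x^{±1}]/I`. -/
def Qn (v : Fin m → ℝ) (I : Ideal (Laur k m)) (x : Laur k m ⧸ I) : ℝ :=
  sInf {r : ℝ | ∃ g : Laur k m, Ideal.Quotient.mk I g = x ∧ ((N0 v g : NNReal) : ℝ) = r}

section Qn

variable (v : Fin m → ℝ) (I : Ideal (Laur k m))

lemma Qn_set_nonempty (x : Laur k m ⧸ I) :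
    {r : ℝ | ∃ g : Laur k m, Ideal.Quotient.mk I g = x ∧ ((N0 v g : NNReal) : ℝ) = r}.Nonempty := by
  obtain ⟨g, hg⟩ := Ideal.Quotient.mk_surjective x
  exact ⟨((N0 v g : NNReal) : ℝ), g, hg, rfl⟩

lemma Qn_set_bdd (x : Laur k m ⧸ I) :
    BddBelow {r : ℝ | ∃ g : Laur k m, Ideal.Quotient.mk I g = x ∧ ((N0 v g : NNReal) : ℝ) = r} := by
  refine ⟨0, ?_⟩
  rintro r ⟨g, hg, rfl⟩
  exact NNReal.coe_nonneg _

lemma Qn_le_rep {x : Laur k m ⧸ I} {g : Laur k m} (hg : Ideal.Quotient.mk I g = x) :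
    Qn v I x ≤ ((N0 v g : NNReal) : ℝ) :=
  csInf_le (Qn_set_bdd v I x) ⟨g, hg, rfl⟩

lemma Qn_nonneg (x : Laur k m ⧸ I) : 0 ≤ Qn v I x := by
  apply Real.sInf_nonneg
  rintro r ⟨g, hg, rfl⟩
  exact NNReal.coe_nonneg _

lemma Qn_approx (x : Laur k m ⧸ I) {ε : ℝ} (hε : 0 < ε) :
    ∃ g : Laur k m, Ideal.Quotient.mk I g = x ∧ ((N0 v g : NNReal) : ℝ) < Qn v I x + ε := by
  obtain ⟨r, ⟨g, hg, rfl⟩, hr⟩ := Real.lt_sInf_add_pos (Qn_set_nonempty v I x) hε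
  exact ⟨g, hg, hr⟩

lemma Qn_zero : Qn v I 0 = 0 := by
  refine le_antisymm ?_ (Qn_nonneg v I 0)
  have := Qn_le_rep v I (x := 0) (g := 0) (map_zero _)
  rwa [N0_zero, NNReal.coe_zero] at this

lemma Qn_one (hv : v ∈ tropTrivTorus I) : Qn v I 1 = 1 := by
  refine le_antisymm ?_ ?_
  · have := Qn_le_rep v I (x := 1) (g := 1) (map_one _)
    rwa [N0_one, NNReal.coe_one] at this
  · apply le_csInf (Qn_set_nonempty v I 1)
    rintro r ⟨g, hgmk, rfl⟩
    have hsub : g - 1 ∈ I := by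
      rw [← Ideal.Quotient.eq (I := I)]
      rw [hgmk, map_one]
    rcases eq_or_ne (g - 1) 0 with h0 | hne0
    · have : g = 1 := by rwa [sub_eq_zero] at h0
      rw [this, N0_one, NNReal.coe_one]
    · by_contra hlt
      push_neg at hlt
      have hall : ∀ u ∈ g.coeff.support, 0 < ∑ i, (u i : ℝ) * v i := by
        intro u hu
        have h1 : (Real.toNNReal (Wt v u) : ℝ) ≤ ((N0 v g : NNReal) : ℝ) :=
          NNReal.coe_le_coe.mpr (le_N0 hu)
        rw [Real.coe_toNNReal _ (Wt_pos v u).le] at h1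
        have h2 : Wt v u < 1 := lt_of_le_of_lt h1 hlt
        have h3 : -(∑ i, (u i : ℝ) * v i) < 0 := Real.exp_lt_one_iff.mp h2
        linarith
      have h0g : (0 : Fin m → ℤ) ∉ g.coeff.support := by
        intro h
        have := hall 0 h
        simp at this
      have hg0 : g.coeff 0 = 0 := Finsupp.notMem_support_iff.mp h0g
      have hone0 : (1 : Laur k m).coeff 0 = 1 := by
        rw [AddMonoidAlgebra.one_def]
        exact Finsupp.single_eq_same
      have hh0 : (g - 1).coeff 0 = -1 := by
        rw [AddMonoidAlgebra.coeff_sub, Finsupp.sub_apply, hg0, hone0]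
        ring
      have h0mem : (0 : Fin m → ℤ) ∈ (g - 1).coeff.support := by
        rw [Finsupp.mem_support_iff, hh0]
        norm_num
      obtain ⟨u, hu, u', hu', hneu, hequ, hminall⟩ := hv (g - 1) hsub hne0
      have hu_le0 : (∑ i, (u i : ℝ) * v i) ≤ 0 := by
        have := hminall 0 h0mem
        simpa using this
      have claim : ∀ w, w ∈ (g - 1).coeff.support → (∑ i, (w i : ℝ) * v i) ≤ 0 → w = 0 := by
        intro w hw hwle
        by_contra hw0
        have hone : (1 : Laur k m).coeff w = 0 := by
          rw [AddMonoidAlgebra.one_def]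
          exact Finsupp.single_eq_of_ne' (fun h => hw0 h.symm)
        have hgw : (g - 1).coeff w = g.coeff w := by rw [AddMonoidAlgebra.coeff_sub, Finsupp.sub_apply, hone, sub_zero]
        have hwsup : w ∈ g.coeff.support := by
          rw [Finsupp.mem_support_iff, ← hgw]
          exact Finsupp.mem_support_iff.mp hw
        exact absurd (hall w hwsup) (not_lt.mpr hwle)
      have hu0 : u = 0 := claim u hu hu_le0
      have hu'0 : u' = 0 := claim u' hu' (by rw [← hequ]; exact hu_le0)
      exact hneu (hu0.trans hu'0.symm)

lemma Qn_mul_le (x y : Laur k m ⧸ I) : Qn v I (x * y) ≤ Qn v I x * Qn v I y := by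
  apply le_of_forall_eps_mul (M := Qn v I x + Qn v I y + 1)
    (by have := Qn_nonneg v I x; have := Qn_nonneg v I y; linarith)
  intro ε hε0 hε1
  obtain ⟨g, hg, hgN⟩ := Qn_approx v I x hε0
  obtain ⟨h, hh, hhN⟩ := Qn_approx v I y hε0
  have hrep : Ideal.Quotient.mk I (g * h) = x * y := by rw [map_mul, hg, hh]
  have h1 : Qn v I (x * y) ≤ ((N0 v (g * h) : NNReal) : ℝ) := Qn_le_rep v I hrep
  have h2 : ((N0 v (g * h) : NNReal) : ℝ) ≤ ((N0 v g : NNReal) : ℝ) * ((N0 v h : NNReal) : ℝ) := by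
    rw [← NNReal.coe_mul]
    exact NNReal.coe_le_coe.mpr (N0_mul_le v g h)
  have hgN0 : (0:ℝ) ≤ ((N0 v g : NNReal) : ℝ) := NNReal.coe_nonneg _
  have hhN0 : (0:ℝ) ≤ ((N0 v h : NNReal) : ℝ) := NNReal.coe_nonneg _
  have h3 : ((N0 v g : NNReal) : ℝ) * ((N0 v h : NNReal) : ℝ)
      ≤ (Qn v I x + ε) * (Qn v I y + ε) := by
    apply mul_le_mul hgN.le hhN.le hhN0 (by have := Qn_nonneg v I x; linarith)
  have h4 : (Qn v I x + ε) * (Qn v I y + ε)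
      ≤ Qn v I x * Qn v I y + ε * (Qn v I x + Qn v I y + 1) := by
    nlinarith [Qn_nonneg v I x, Qn_nonneg v I y]
  linarith

lemma Qn_add_le (x y : Laur k m ⧸ I) : Qn v I (x + y) ≤ max (Qn v I x) (Qn v I y) := by
  apply le_of_forall_eps_mul (M := 1) one_pos.le
  intro ε hε0 hε1
  obtain ⟨g, hg, hgN⟩ := Qn_approx v I x hε0
  obtain ⟨h, hh, hhN⟩ := Qn_approx v I y hε0
  have hrep : Ideal.Quotient.mk I (g + h) = x + y := by rw [map_add, hg, hh]
  have h1 : Qn v I (x + y) ≤ ((N0 v (g + h) : NNReal) : ℝ) := Qn_le_rep v I hrep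
  have h2 : ((N0 v (g + h) : NNReal) : ℝ)
      ≤ max ((N0 v g : NNReal) : ℝ) ((N0 v h : NNReal) : ℝ) := by
    rw [← NNReal.coe_max]
    exact NNReal.coe_le_coe.mpr (N0_add_le v g h)
  have h3 : max ((N0 v g : NNReal) : ℝ) ((N0 v h : NNReal) : ℝ)
      ≤ max (Qn v I x + ε) (Qn v I y + ε) := max_le_max hgN.le hhN.le
  have h4 : max (Qn v I x + ε) (Qn v I y + ε) ≤ max (Qn v I x) (Qn v I y) + ε * 1 := by
    rw [mul_one]
    exact max_le (by simp [le_max_left (Qn v I x) (Qn v I y)])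
      (by simp [le_max_right (Qn v I x) (Qn v I y)])
  linarith

lemma Qn_prenorm (hv : v ∈ tropTrivTorus I) : PreNorm (Qn v I) (Qn v I) where
  nonneg := Qn_nonneg v I
  zero := Qn_zero v I
  one := Qn_one v I hv
  mul_le := Qn_mul_le v I
  add_le := Qn_add_le v I
  le := fun _ => le_rfl

end Qn

lemma eq_of_mul_eq_one_le {a b A B : ℝ} (hab : a * b = 1) (hA : a ≤ A) (hB : b ≤ B)
    (hAB : A * B = 1) (ha : 0 ≤ a) (hb : 0 ≤ b) (hApos : 0 < A) : a = A := by
  have hbpos : 0 < b := by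
    rcases hb.eq_or_lt with h | h
    · rw [← h] at hab; simp at hab
    · exact h
  have h1 : A * b ≤ A * B := mul_le_mul_of_nonneg_left hB hApos.le
  rw [hAB, ← hab] at h1
  have h2 : A ≤ a := le_of_mul_le_mul_right h1 hbpos
  exact le_antisymm hA h2

lemma Wt_single (v : Fin m → ℝ) (i : Fin m) : Wt v (Pi.single i 1) = Real.exp (-(v i)) := by
  unfold Wt
  congr 2
  rw [Finset.sum_eq_single i]
  · simp
  · intro b _ hb
    simp [Pi.single_apply, hb]
  · simp

lemma Wt_single_neg (v : Fin m → ℝ) (i : Fin m) : Wt v (-Pi.single i 1) = Real.exp (v i) := by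
  unfold Wt
  congr 1
  have : (∑ j, (((-Pi.single i 1 : Fin m → ℤ)) j : ℝ) * v j)
      = -(∑ j, (((Pi.single i 1 : Fin m → ℤ)) j : ℝ) * v j) := by
    rw [← Finset.sum_neg_distrib]
    apply Finset.sum_congr rfl
    intro j _
    have : ((-Pi.single i 1 : Fin m → ℤ)) j = -((Pi.single i 1 : Fin m → ℤ) j) := rfl
    rw [this]
    push_cast
    ring
  rw [this]
  have h2 : (∑ j, (((Pi.single i 1 : Fin m → ℤ)) j : ℝ) * v j) = v i := by
    rw [Finset.sum_eq_single i]
    · simp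
    · intro b _ hb
      simp [Pi.single_apply, hb]
    · simp
  rw [h2]
  ring_nf

/-- Main surjectivity construction: every point of `trop(X)` is hit by a point of
`X^an`. -/
theorem exists_xan_of_trop {I : Ideal (Laur k m)} {v : Fin m → ℝ}
    (hv : v ∈ tropTrivTorus I) :
    ∃ x : ↥(XanTriv k (Laur k m ⧸ I)), piTorus I x = v := by
  obtain ⟨p, hp, hmul⟩ := exists_mult_prenorm (Qn_prenorm v I hv)
  -- basic facts about monomial images
  have hmono_mul : ∀ (u w : Fin m → ℤ) (a b : k),
      Ideal.Quotient.mk I (AddMonoidAlgebra.single u a) *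
        Ideal.Quotient.mk I (AddMonoidAlgebra.single w b)
      = Ideal.Quotient.mk I (AddMonoidAlgebra.single (u + w) (a * b)) := by
    intro u w a b
    rw [← map_mul, AddMonoidAlgebra.single_mul_single]
  have hmono_le : ∀ (u : Fin m → ℤ) (a : k), a ≠ 0 →
      p (Ideal.Quotient.mk I (AddMonoidAlgebra.single u a)) ≤ Wt v u := by
    intro u a ha
    have h1 := Qn_le_rep v I (x := Ideal.Quotient.mk I (AddMonoidAlgebra.single u a)) rfl
    rw [N0_single v u ha, Real.coe_toNNReal _ (Wt_pos v u).le] at h1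
    exact (hp.le _).trans h1
  have hone_mk : Ideal.Quotient.mk I (AddMonoidAlgebra.single (0 : Fin m → ℤ) (1:k)) = 1 := by
    rw [← AddMonoidAlgebra.one_def, map_one]
  -- the monomial values are determined
  have hmono_eq : ∀ u : Fin m → ℤ,
      p (Ideal.Quotient.mk I (AddMonoidAlgebra.single u (1:k))) = Wt v u := by
    intro u
    have hprod : p (Ideal.Quotient.mk I (AddMonoidAlgebra.single u (1:k))) *
        p (Ideal.Quotient.mk I (AddMonoidAlgebra.single (-u) (1:k))) = 1 := by
      rw [← hmul, hmono_mul]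
      simp only [add_neg_cancel, mul_one]
      rw [hone_mk, hp.one]
    have hWt : Wt v u * Wt v (-u) = 1 := by
      rw [← Wt_add]
      simp [Wt_zero]
    exact eq_of_mul_eq_one_le hprod (hmono_le u 1 one_ne_zero)
      (hmono_le (-u) 1 one_ne_zero) hWt (hp.nonneg _) (hp.nonneg _) (Wt_pos v u)
  -- scalars
  have halg : ∀ a : k, a ≠ 0 → p (algebraMap k (Laur k m ⧸ I) a) = 1 := by
    intro a ha
    have hrepr : algebraMap k (Laur k m ⧸ I) a
        = Ideal.Quotient.mk I (AddMonoidAlgebra.single (0 : Fin m → ℤ) a) := by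
      rw [IsScalarTower.algebraMap_apply k (Laur k m) (Laur k m ⧸ I) a,
        show (algebraMap k (Laur k m)) a = AddMonoidAlgebra.single (0 : Fin m → ℤ) a from by
          rw [AddMonoidAlgebra.coe_algebraMap]; simp]
      rfl
    have hprod : p (Ideal.Quotient.mk I (AddMonoidAlgebra.single (0 : Fin m → ℤ) a)) *
        p (Ideal.Quotient.mk I (AddMonoidAlgebra.single (0 : Fin m → ℤ) a⁻¹)) = 1 := by
      rw [← hmul, hmono_mul]
      simp only [add_zero, mul_inv_cancel₀ ha]
      rw [hone_mk, hp.one]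
    have h1 : p (Ideal.Quotient.mk I (AddMonoidAlgebra.single (0 : Fin m → ℤ) a)) ≤ 1 := by
      have := hmono_le 0 a ha
      rwa [Wt_zero] at this
    have h2 : p (Ideal.Quotient.mk I (AddMonoidAlgebra.single (0 : Fin m → ℤ) a⁻¹)) ≤ 1 := by
      have := hmono_le 0 a⁻¹ (inv_ne_zero ha)
      rwa [Wt_zero] at this
    rw [hrepr]
    exact eq_of_mul_eq_one_le hprod h1 h2 (by norm_num) (hp.nonneg _) (hp.nonneg _) one_pos
  have hmem : p ∈ XanTriv k (Laur k m ⧸ I) := by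
    refine ⟨⟨hp.nonneg, hp.zero, hp.one, hmul, fun f g => hp.add_le' f g⟩, halg⟩
  refine ⟨⟨p, hmem⟩, ?_⟩
  funext i
  show -Real.log (p (coordLaur I i)) = v i
  have hcoord : p (coordLaur I i) = Real.exp (-(v i)) := by
    have := hmono_eq (Pi.single i 1)
    rw [Wt_single] at this
    exact this
  rw [hcoord, Real.log_exp]
  ring

/-! ### The forward inclusion: points of `X^an` tropicalize into `trop(X)` -/

lemma xan_pow {A : Type} [CommRing A] {p : A → ℝ} (hp : IsMultSeminorm p) (z : A) :
    ∀ n : ℕ, p (z ^ n) = p z ^ n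
  | 0 => by simp [pow_zero, hp.map_one]
  | n + 1 => by rw [pow_succ, pow_succ, hp.map_mul, xan_pow hp z n]

lemma xan_sum_le {A : Type} [CommRing A] {p : A → ℝ} (hp : IsMultSeminorm p)
    {ι : Type*} (s : Finset ι) (F : ι → A) :
    p (∑ i ∈ s, F i) ≤ ∑ i ∈ s, p (F i) := by
  classical
  induction s using Finset.induction_on with
  | empty => simp [hp.map_zero]
  | insert _ _ hni ih =>
      rename_i a s
      rw [Finset.sum_insert hni, Finset.sum_insert hni]
      exact (hp.add_le _ _).trans (by linarith)

lemma xan_sum_le_max {A : Type} [CommRing A] {p : A → ℝ} (hp : IsMultSeminorm p)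
    (hna : ∀ f g : A, p (f + g) ≤ max (p f) (p g))
    {ι : Type*} (s : Finset ι) (F : ι → A) {c : ℝ} (hc : 0 ≤ c)
    (h : ∀ i ∈ s, p (F i) ≤ c) : p (∑ i ∈ s, F i) ≤ c := by
  classical
  induction s using Finset.induction_on with
  | empty => simpa [hp.map_zero] using hc
  | insert _ _ hni ih =>
      rename_i a s
      rw [Finset.sum_insert hni]
      refine (hna _ _).trans (max_le (h a (Finset.mem_insert_self a s)) ?_)
      exact ih (fun i hi => h i (Finset.mem_insert_of_mem hi))

/-- Multiplicative seminorms trivial on `k*` are nonarchimedean. -/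
lemma xan_nonarch {k : Type} [Field k] {A : Type} [CommRing A] [Algebra k A] {p : A → ℝ}
    (hp : IsMultSeminorm p) (hsc : ∀ a : k, a ≠ 0 → p (algebraMap k A a) = 1)
    (f g : A) : p (f + g) ≤ max (p f) (p g) := by
  have hnat : ∀ (n : ℕ) (z : A), p ((n : A) * z) ≤ p z := by
    intro n z
    have h1 : ((n : ℕ) : A) = algebraMap k A ((n : k)) := by rw [map_natCast]
    rw [h1, hp.map_mul]
    rcases eq_or_ne ((n : k)) 0 with h | h
    · rw [h, map_zero, hp.map_zero, zero_mul]
      exact hp.nonneg z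
    · rw [hsc _ h, one_mul]
  set M := max (p f) (p g) with hM
  have hM0 : 0 ≤ M := le_trans (hp.nonneg f) (le_max_left _ _)
  have key : ∀ n : ℕ, p (f + g) ^ n ≤ ((n : ℝ) + 1) * M ^ n := by
    intro n
    rw [← xan_pow hp]
    have hexp : (f + g) ^ n
        = ∑ i ∈ Finset.range (n + 1), f ^ i * g ^ (n - i) * (n.choose i : A) := add_pow f g n
    have hterm : ∀ i ∈ Finset.range (n + 1),
        p (f ^ i * g ^ (n - i) * (n.choose i : A)) ≤ M ^ n := by
      intro i hi
      have hin : i ≤ n := Nat.lt_succ_iff.mp (Finset.mem_range.mp hi)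
      have h1 : p (f ^ i * g ^ (n - i) * (n.choose i : A))
          = p ((n.choose i : A) * (f ^ i * g ^ (n - i))) := by ring_nf
      rw [h1]
      refine (hnat _ _).trans ?_
      rw [hp.map_mul, xan_pow hp, xan_pow hp]
      have h2 : p f ^ i ≤ M ^ i := pow_le_pow_left₀ (hp.nonneg f) (le_max_left _ _) i
      have h3 : p g ^ (n - i) ≤ M ^ (n - i) :=
        pow_le_pow_left₀ (hp.nonneg g) (le_max_right _ _) (n - i)
      calc p f ^ i * p g ^ (n - i) ≤ M ^ i * M ^ (n - i) :=
            mul_le_mul h2 h3 (pow_nonneg (hp.nonneg g) _) (pow_nonneg hM0 _)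
        _ = M ^ n := by rw [← pow_add]; congr 1; omega
    calc p ((f + g) ^ n) ≤ ∑ i ∈ Finset.range (n + 1),
          p (f ^ i * g ^ (n - i) * (n.choose i : A)) := by
            rw [hexp]; exact xan_sum_le hp _ _
      _ ≤ ((n : ℝ) + 1) * M ^ n := by
          have := Finset.sum_le_card_nsmul (Finset.range (n + 1))
            (fun i => p (f ^ i * g ^ (n - i) * (n.choose i : A))) (M ^ n) hterm
          simpa [Finset.card_range, nsmul_eq_mul, add_mul] using this
  by_contra hcon
  push_neg at hcon
  set P := p (f + g) with hPdef
  rcases hM0.eq_or_lt with h0 | hMpos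
  · have h1 := key 1
    rw [← h0] at h1
    simp at h1
    have hP0 : 0 ≤ P := hp.nonneg _
    rw [← h0] at hcon
    nlinarith
  · set d := P / M - 1 with hd
    have hd0 : 0 < d := by
      have : 1 < P / M := (one_lt_div hMpos).mpr hcon
      rw [hd]; linarith
    obtain ⟨N₀, hN₀⟩ := pow_beats_linear hd0 (zero_le_one)
    have h2 := hN₀ N₀ le_rfl
    rw [one_mul] at h2
    have h3 : (1 + d) ^ N₀ = P ^ N₀ / M ^ N₀ := by
      rw [hd]
      have : 1 + (P / M - 1) = P / M := by ring
      rw [this, div_pow]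
    rw [h3] at h2
    have h4 : ((N₀ : ℝ) + 1) * M ^ N₀ < P ^ N₀ :=
      (lt_div_iff₀ (pow_pos hMpos N₀)).mp h2
    have h5 := key N₀
    linarith

/-- The value of a point of `X^an` on a monomial. -/
lemma xan_monomial {k : Type} [Field k] {m : ℕ} (I : Ideal (Laur k m))
    (x : ↥(XanTriv k (Laur k m ⧸ I))) (u : Fin m → ℤ) {a : k} (ha : a ≠ 0) :
    x.1 (Ideal.Quotient.mk I (AddMonoidAlgebra.single u a)) = Wt (piTorus I x) u := by
  obtain ⟨hp, hsc⟩ := x.2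
  set p := x.1 with hpdef
  set v := piTorus I x with hvdef
  set τ : (Fin m → ℤ) → ℝ := fun w => p (Ideal.Quotient.mk I (AddMonoidAlgebra.single w (1:k)))
    with hτ
  have hone_mk : Ideal.Quotient.mk I (AddMonoidAlgebra.single (0 : Fin m → ℤ) (1:k)) = 1 := by
    rw [← AddMonoidAlgebra.one_def, map_one]
  have hτ_mul : ∀ w w', τ (w + w') = τ w * τ w' := by
    intro w w'
    rw [hτ]
    simp only []
    rw [← hp.map_mul, ← map_mul, AddMonoidAlgebra.single_mul_single, one_mul]
  have hτ_pos : ∀ w, 0 < τ w := by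
    intro w
    have h1 : τ w * τ (-w) = 1 := by
      rw [← hτ_mul]
      simp only [add_neg_cancel]
      show p (Ideal.Quotient.mk I (AddMonoidAlgebra.single (0 : Fin m → ℤ) (1:k))) = 1
      rw [hone_mk, hp.map_one]
    rcases (hp.nonneg _).eq_or_lt with h | h
    · exfalso
      rw [hτ] at h1
      simp only [] at h1
      rw [← h] at h1
      simp at h1
    · exact h
  set L : (Fin m → ℤ) →+ ℝ := AddMonoidHom.mk' (fun w => Real.log (τ w)) (by
    intro w w'
    show Real.log (τ (w + w')) = Real.log (τ w) + Real.log (τ w')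
    rw [hτ_mul, Real.log_mul (ne_of_gt (hτ_pos w)) (ne_of_gt (hτ_pos w'))]) with hL
  have hLi : ∀ i : Fin m, L (Pi.single i 1) = -(v i) := by
    intro i
    have h1 : L (Pi.single i 1) = Real.log (τ (Pi.single i 1)) := rfl
    have h2 : τ (Pi.single i 1) = p (coordLaur I i) := rfl
    rw [h1, h2]
    have h3 : v i = -Real.log (p (coordLaur I i)) := rfl
    rw [h3]; ring
  have hLu : ∀ w : Fin m → ℤ, L w = -(∑ i, (w i : ℝ) * v i) := by
    intro w
    conv_lhs => rw [← Finset.univ_sum_single w]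
    rw [map_sum]
    rw [← Finset.sum_neg_distrib]
    apply Finset.sum_congr rfl
    intro i _
    have h1 : Pi.single i (w i) = ((w i) • Pi.single i (1:ℤ) : Fin m → ℤ) := by
      ext j
      by_cases h : j = i
      · subst h; simp
      · simp [Pi.single_apply, h]
    rw [h1, map_zsmul, hLi i]
    have : (w i) • (-(v i)) = ((w i : ℤ) : ℝ) * (-(v i)) := zsmul_eq_mul _ _
    rw [this]
    ring
  have hτWt : ∀ w, τ w = Wt v w := by
    intro w
    have h1 : τ w = Real.exp (Real.log (τ w)) := (Real.exp_log (hτ_pos w)).symm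
    have h2 : Real.log (τ w) = L w := rfl
    rw [h1, h2, hLu w]
    rfl
  have hsplit : Ideal.Quotient.mk I (AddMonoidAlgebra.single u a)
      = algebraMap k (Laur k m ⧸ I) a *
        Ideal.Quotient.mk I (AddMonoidAlgebra.single u (1:k)) := by
    rw [IsScalarTower.algebraMap_apply k (Laur k m) (Laur k m ⧸ I) a,
      show (algebraMap k (Laur k m)) a = AddMonoidAlgebra.single (0 : Fin m → ℤ) a from by
        rw [AddMonoidAlgebra.coe_algebraMap]; simp,
      Ideal.Quotient.algebraMap_eq I]
    rw [← map_mul, AddMonoidAlgebra.single_mul_single, zero_add, mul_one]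
  show p (Ideal.Quotient.mk I (AddMonoidAlgebra.single u a)) = Wt v u
  rw [hsplit, hp.map_mul, hsc a ha, one_mul]
  exact hτWt u

/-- The forward inclusion. -/
lemma piTorus_mem_trop {k : Type} [Field k] {m : ℕ} (I : Ideal (Laur k m))
    (x : ↥(XanTriv k (Laur k m ⧸ I))) : piTorus I x ∈ tropTrivTorus I := by
  intro f hfI hf0
  obtain ⟨hp, hsc⟩ := x.2
  set p := x.1 with hpdef
  set v := piTorus I x with hvdef
  by_contra hnot
  have hna := fun f g => xan_nonarch hp hsc f g
  have hne : f.coeff.support.Nonempty := Finsupp.support_nonempty_iff.mpr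
    (fun h => hf0 (AddMonoidAlgebra.coeff_injective (by simpa using h)))
  obtain ⟨u₀, hu₀, hmin⟩ := f.coeff.support.exists_min_image (fun u => ∑ i, (u i : ℝ) * v i) hne
  have huniq : ∀ u ∈ f.coeff.support, (∑ i, (u i : ℝ) * v i) = (∑ i, (u₀ i : ℝ) * v i) → u = u₀ := by
    intro u hu hequ
    by_contra hneu
    exact hnot ⟨u₀, hu₀, u, hu, fun h => hneu h.symm, hequ.symm, hmin⟩
  -- decomposition of `mk f = 0`
  have h4 : (∑ u ∈ f.coeff.support, AddMonoidAlgebra.single u (f.coeff u)) = f := by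
    conv_rhs => rw [← AddMonoidAlgebra.sum_coeff_single f]
    rfl
  have h3 : (∑ u ∈ f.coeff.support, (Ideal.Quotient.mk I) (AddMonoidAlgebra.single u (f.coeff u))) = 0 := by
    rw [← map_sum, h4]
    exact Ideal.Quotient.eq_zero_iff_mem.mpr hfI
  have h5 : (Ideal.Quotient.mk I) (AddMonoidAlgebra.single u₀ (f.coeff u₀))
      + ∑ u ∈ f.coeff.support.erase u₀, (Ideal.Quotient.mk I) (AddMonoidAlgebra.single u (f.coeff u)) = 0 := by
    rw [Finset.add_sum_erase f.coeff.support
      (fun u => (Ideal.Quotient.mk I) (AddMonoidAlgebra.single u (f.coeff u))) hu₀]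
    exact h3
  set R := ∑ u ∈ f.coeff.support.erase u₀, (Ideal.Quotient.mk I) (AddMonoidAlgebra.single u (f.coeff u))
    with hR
  have hmain : (Ideal.Quotient.mk I) (AddMonoidAlgebra.single u₀ (f.coeff u₀)) = -R := by
    rw [hR]; linear_combination h5
  -- p(-R) = p(R)
  have hminus : p (-R) = p R := by
    have h6 : (-R : Laur k m ⧸ I) = algebraMap k (Laur k m ⧸ I) (-1) * R := by
      rw [map_neg, map_one]; ring
    rw [h6, hp.map_mul, hsc (-1) (by norm_num), one_mul]
  -- value of the main term
  have hfu₀ : f.coeff u₀ ≠ 0 := Finsupp.mem_support_iff.mp hu₀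
  have hval : p ((Ideal.Quotient.mk I) (AddMonoidAlgebra.single u₀ (f.coeff u₀))) = Wt v u₀ :=
    xan_monomial I x u₀ hfu₀
  -- strict bound on the rest
  have hstrict : ∀ u ∈ f.coeff.support.erase u₀, Wt v u < Wt v u₀ := by
    intro u hu
    have hu' : u ∈ f.coeff.support := Finset.mem_of_mem_erase hu
    have hne' : u ≠ u₀ := Finset.ne_of_mem_erase hu
    have h7 : (∑ i, (u₀ i : ℝ) * v i) ≤ (∑ i, (u i : ℝ) * v i) := hmin u hu'
    have h8 : (∑ i, (u₀ i : ℝ) * v i) ≠ (∑ i, (u i : ℝ) * v i) := by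
      intro h
      exact hne' (huniq u hu' h.symm)
    have h9 : (∑ i, (u₀ i : ℝ) * v i) < (∑ i, (u i : ℝ) * v i) := lt_of_le_of_ne h7 h8
    unfold Wt
    exact Real.exp_lt_exp.mpr (by linarith)
  have hrest : p R < Wt v u₀ := by
    rcases (f.coeff.support.erase u₀).eq_empty_or_nonempty with hemp | hne2
    · rw [hR, hemp, Finset.sum_empty, hp.map_zero]
      exact Wt_pos v u₀
    · set t := (f.coeff.support.erase u₀).sup' hne2 (fun u => Wt v u) with ht
      have ht_lt : t < Wt v u₀ := by
        rw [ht, Finset.sup'_lt_iff hne2]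
        exact hstrict
      have ht_0 : 0 ≤ t := by
        obtain ⟨w, hw⟩ := hne2
        exact le_trans (Wt_pos v w).le (Finset.le_sup' _ hw)
      have h10 : p R ≤ t := by
        rw [hR]
        apply xan_sum_le_max hp hna _ _ ht_0
        intro u hu
        have hfu : f.coeff u ≠ 0 := Finsupp.mem_support_iff.mp (Finset.mem_of_mem_erase hu)
        rw [show p ((Ideal.Quotient.mk I) (AddMonoidAlgebra.single u (f.coeff u))) = Wt v u from
          xan_monomial I x u hfu]
        exact Finset.le_sup' (fun u => Wt v u) hu
      exact lt_of_le_of_lt h10 ht_lt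
  rw [hmain, hminus] at hval
  rw [← hval] at hrest
  exact lt_irrefl _ hrest


lemma single_unit {k : Type} [Field k] {m : ℕ} (I : Ideal (Laur k m)) (u : Fin m → ℤ) :
    IsUnit (Ideal.Quotient.mk I (AddMonoidAlgebra.single u (1:k))) := by
  apply IsUnit.of_mul_eq_one (Ideal.Quotient.mk I (AddMonoidAlgebra.single (-u) (1:k)))
  rw [← map_mul, AddMonoidAlgebra.single_mul_single]
  simp only [add_neg_cancel, mul_one]
  rw [← AddMonoidAlgebra.one_def, map_one]

end Concrete

end Stmt10Aux

/-- Proposition 5.2.  Over an algebraically closed field `k` with the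
trivial valuation, let `X ⊆ T^m` be cut out by the radical ideal `I`, with coordinate
ring `k[X] = k[x_1^{±1}, ..., x_m^{±1}] / I`.  Each coordinate function `x_i` is a unit
in `k[X]`, every `x ∈ X^an` satisfies `|x_i|_x > 0` (so the map
`π : X^an → ℝ^m`, `x ↦ (−log|x_1|_x, ..., −log|x_m|_x)`, is well-defined), `π` is
continuous, and the image of `π` is exactly `trop(X)`. -/
theorem stmt10 {k : Type} [Field k] [IsAlgClosed k]
    (m : ℕ) (I : Ideal (Laur k m)) (hrad : I.IsRadical) :
    (∀ i : Fin m, IsUnit (coordLaur I i)) ∧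
      (∀ x : ↥(XanTriv k (Laur k m ⧸ I)), ∀ i : Fin m, 0 < x.1 (coordLaur I i)) ∧
      Continuous (piTorus I) ∧
      Set.range (piTorus I) = tropTrivTorus I := by
  classical
  have hunit : ∀ i : Fin m, IsUnit (coordLaur I i) := fun i =>
    Stmt10Aux.single_unit I (Pi.single i 1)
  have hpos : ∀ x : ↥(XanTriv k (Laur k m ⧸ I)), ∀ i : Fin m, 0 < x.1 (coordLaur I i) := by
    intro x i
    obtain ⟨hp, hsc⟩ := x.2
    obtain ⟨w, hw⟩ := hunit i
    have h1 : x.1 (coordLaur I i) * x.1 ((w⁻¹ : (Laur k m ⧸ I)ˣ) : Laur k m ⧸ I) = 1 := by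
      rw [← hp.map_mul, ← hw]
      rw [show ((w : Laur k m ⧸ I) * ((w⁻¹ : (Laur k m ⧸ I)ˣ) : Laur k m ⧸ I)) = 1 from
        w.mul_inv]
      exact hp.map_one
    rcases (hp.nonneg (coordLaur I i)).eq_or_lt with h | h
    · exfalso
      rw [← h, zero_mul] at h1
      norm_num at h1
    · exact h
  have hcont : Continuous (piTorus I) := by
    apply continuous_pi
    intro i
    rw [continuous_iff_continuousAt]
    intro x
    have h1 : ContinuousAt (fun y : ↥(XanTriv k (Laur k m ⧸ I)) => y.1 (coordLaur I i)) x :=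
      ((continuous_apply (coordLaur I i)).comp continuous_subtype_val).continuousAt
    exact (h1.log (ne_of_gt (hpos x i))).neg
  refine ⟨hunit, hpos, hcont, ?_⟩
  apply Set.eq_of_subset_of_subset
  · rintro v ⟨x, rfl⟩
    exact Stmt10Aux.piTorus_mem_trop I x
  · intro v hv
    obtain ⟨x, hx⟩ := Stmt10Aux.exists_xan_of_trop hv
    exact ⟨x, hx⟩

end
end

section
/- Let X be a closed subvariety of the torus T^m over k. For every x ∈ X^an each coordinate function x_i is a unit in k[X], so |x_i|_x > 0, and the map π : X^an → ℝ^m defined by π(x) = (−log|x_1|_x, ..., −log|x_m|_x) is well-defined. This map π is continuous and proper: the preimage under π of every compact subset of ℝ^m is compact. -/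
open scoped BigOperators Classical

noncomputable section

lemma aux_seminorm_sum_le {A : Type} [CommRing A] {p : A → ℝ} (hp : IsMultSeminorm p)
    {β : Type*} (s : Finset β) (F : β → A) :
    p (∑ b ∈ s, F b) ≤ ∑ b ∈ s, p (F b) := by
  classical
  induction s using Finset.cons_induction with
  | empty => simp [hp.map_zero]
  | cons b s hb ih =>
      rw [Finset.sum_cons, Finset.sum_cons]
      exact le_trans (hp.add_le _ _) (by gcongr)

lemma aux_zpow_bound {R t : ℝ} (hR : 0 ≤ R) (ht : 0 < t)
    (h1 : Real.exp (-R) ≤ t) (h2 : t ≤ Real.exp R) (z : ℤ) :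
    t ^ z ≤ Real.exp (R * |(z : ℝ)|) := by
  have key : ∀ (s : ℝ) (n : ℕ), 0 ≤ s → s ≤ Real.exp R → s ^ n ≤ Real.exp (R * n) := by
    intro s n hs hsR
    calc s ^ n ≤ (Real.exp R) ^ n := pow_le_pow_left₀ hs hsR n
    _ = Real.exp (R * n) := by rw [← Real.exp_nat_mul, mul_comm]
  obtain ⟨n, rfl | rfl⟩ := z.eq_nat_or_neg
  · rw [zpow_natCast]
    have : |((n : ℤ) : ℝ)| = (n : ℝ) := by simp
    rw [this]
    exact key t n ht.le h2
  · rw [zpow_neg, zpow_natCast, ← inv_pow]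
    have hinv : t⁻¹ ≤ Real.exp R := by
      rw [Real.exp_neg] at h1
      calc t⁻¹ ≤ ((Real.exp R)⁻¹)⁻¹ := inv_anti₀ (by positivity) h1
      _ = Real.exp R := inv_inv _
    have : |((-(n : ℤ) : ℤ) : ℝ)| = (n : ℝ) := by simp
    rw [this]
    exact key t⁻¹ n (by positivity) hinv

lemma aux_single_add {m : ℕ} (i : Fin m) (a b : ℤ) :
    (Pi.single i (a + b) : Fin m → ℤ) = Pi.single i a + Pi.single i b := by
  classical
  funext j
  simp only [Pi.add_apply, Pi.single_apply]
  split <;> simp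

lemma coordLaur_mul_inv {k : Type} [Field k] {m : ℕ} (I : Ideal (Laur k m)) (i : Fin m) :
    coordLaur I i *
      Ideal.Quotient.mk I (AddMonoidAlgebra.single (Pi.single i (-1 : ℤ)) (1 : k)) = 1 := by
  rw [coordLaur, ← map_mul, AddMonoidAlgebra.single_mul_single, one_mul]
  have h : Pi.single i (1 : ℤ) + Pi.single i (-1 : ℤ) = (0 : Fin m → ℤ) := by
    rw [← aux_single_add]; norm_num
  rw [h, ← AddMonoidAlgebra.one_def, map_one]

lemma laurBound {k : Type} [Field k] {m : ℕ} {I : Ideal (Laur k m)}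
    {p : (Laur k m ⧸ I) → ℝ} (hp : IsMultSeminorm p)
    (hconst : ∀ a : k, a ≠ 0 → p (algebraMap k (Laur k m ⧸ I) a) = 1)
    {R : ℝ} (hR : 0 ≤ R)
    (hlo : ∀ i, Real.exp (-R) ≤ p (coordLaur I i))
    (hhi : ∀ i, p (coordLaur I i) ≤ Real.exp R)
    (g : Laur k m) :
    p (Ideal.Quotient.mk I g) ≤ ∑ u ∈ g.coeff.support, Real.exp (R * ∑ i, |(u i : ℝ)|) := by
  classical
  set mk := Ideal.Quotient.mk I with hmk
  set E : (Fin m → ℤ) → ℝ := fun u => p (mk (AddMonoidAlgebra.single u (1 : k))) with hE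
  have hE0 : E 0 = 1 := by
    simp only [hE]
    rw [← AddMonoidAlgebra.one_def, map_one, hp.map_one]
  have hEadd : ∀ u v, E (u + v) = E u * E v := by
    intro u v
    simp only [hE]
    rw [← hp.map_mul, ← map_mul, AddMonoidAlgebra.single_mul_single, one_mul]
  have hEpos : ∀ u, 0 < E u := by
    intro u
    have h1 : E u * E (-u) = 1 := by rw [← hEadd, add_neg_cancel, hE0]
    rcases lt_or_eq_of_le (hp.nonneg (mk (AddMonoidAlgebra.single u 1)) : (0:ℝ) ≤ E u)
      with h | h
    · exact h
    · exfalso; rw [show E u = 0 from h.symm, zero_mul] at h1; exact zero_ne_one h1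
  have hcoordE : ∀ i, E (Pi.single i 1) = p (coordLaur I i) := fun i => rfl
  have hEzpow : ∀ (i : Fin m) (z : ℤ), E (Pi.single i z) = (E (Pi.single i 1)) ^ z := by
    intro i z
    have hne : E (Pi.single i 1) ≠ 0 := ne_of_gt (hEpos _)
    have h1 : E (Pi.single i 1) * E (Pi.single i (-1)) = 1 := by
      rw [← hEadd, ← aux_single_add]; norm_num [Pi.single_zero, hE0]
    have hinv1 : E (Pi.single i (-1 : ℤ)) = (E (Pi.single i 1))⁻¹ :=
      eq_inv_of_mul_eq_one_right h1
    induction z using Int.induction_on with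
    | zero => rw [Pi.single_zero, hE0, zpow_zero]
    | succ n ih =>
        rw [aux_single_add, hEadd, ih, zpow_add_one₀ hne]
    | pred n ih =>
        have hsub : (-(n : ℤ) - 1) = (-(n : ℤ)) + (-1) := by ring
        rw [hsub, aux_single_add, hEadd, ih, hinv1, zpow_add₀ hne, zpow_neg_one]
  have hEprod : ∀ u : Fin m → ℤ, E u = ∏ i, (E (Pi.single i 1)) ^ (u i) := by
    intro u
    have key : ∀ s : Finset (Fin m),
        E (∑ i ∈ s, Pi.single i (u i)) = ∏ i ∈ s, E (Pi.single i (u i)) := by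
      intro s
      induction s using Finset.cons_induction with
      | empty => simp [hE0]
      | cons j s hj ih => rw [Finset.sum_cons, Finset.prod_cons, hEadd, ih]
    conv_lhs => rw [← Finset.univ_sum_single u]
    rw [key]
    exact Finset.prod_congr rfl fun i _ => hEzpow i (u i)
  have hEbound : ∀ u : Fin m → ℤ, E u ≤ Real.exp (R * ∑ i, |(u i : ℝ)|) := by
    intro u
    rw [hEprod u, Finset.mul_sum, Real.exp_sum]
    apply Finset.prod_le_prod
    · intro i _; exact le_of_lt (zpow_pos (hEpos _) _)
    · intro i _
      exact aux_zpow_bound hR (hEpos _) (by rw [hcoordE]; exact hlo i)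
        (by rw [hcoordE]; exact hhi i) (u i)
  -- decompose g
  have hdecomp : mk g = ∑ u ∈ g.coeff.support, mk (AddMonoidAlgebra.single u (g.coeff u)) := by
    conv_lhs => rw [← AddMonoidAlgebra.sum_coeff_single g]
    rw [Finsupp.sum, map_sum]
  rw [hdecomp]
  refine le_trans (aux_seminorm_sum_le hp _ _) (Finset.sum_le_sum ?_)
  intro u hu
  have hgu : g.coeff u ≠ 0 := Finsupp.mem_support_iff.mp hu
  have hsplit : (AddMonoidAlgebra.single u (g.coeff u) : Laur k m) =
      AddMonoidAlgebra.single (0 : Fin m → ℤ) (g.coeff u) * AddMonoidAlgebra.single u (1 : k) := by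
    rw [AddMonoidAlgebra.single_mul_single, zero_add, mul_one]
  have halg : mk (AddMonoidAlgebra.single (0 : Fin m → ℤ) (g.coeff u)) =
      algebraMap k (Laur k m ⧸ I) (g.coeff u) := by
    rw [IsScalarTower.algebraMap_apply k (Laur k m) (Laur k m ⧸ I)]
    simp [AddMonoidAlgebra.coe_algebraMap, hmk]
  calc p (mk (AddMonoidAlgebra.single u (g.coeff u)))
      = p (mk (AddMonoidAlgebra.single (0 : Fin m → ℤ) (g.coeff u))) * E u := by
        rw [hsplit, map_mul, hp.map_mul]
    _ = E u := by rw [halg, hconst _ hgu, one_mul]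
    _ ≤ Real.exp (R * ∑ i, |(u i : ℝ)|) := hEbound u


/-- Over an algebraically closed trivially valued field `k`, let
`X ⊆ T^m` be cut out by the radical ideal `I`.  Each coordinate function `x_i` is a unit
in `k[X]`, every `x ∈ X^an` satisfies `|x_i|_x > 0` (so `π : X^an → ℝ^m`,
`x ↦ (−log|x_1|_x, ..., −log|x_m|_x)`, is well-defined), and `π` is continuous and
proper: the preimage of every compact subset of `ℝ^m` is compact. -/
theorem stmt16 {k : Type} [Field k] [IsAlgClosed k]
    (m : ℕ) (I : Ideal (Laur k m)) (hrad : I.IsRadical) :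
    (∀ i : Fin m, IsUnit (coordLaur I i)) ∧
      (∀ x : ↥(XanTriv k (Laur k m ⧸ I)), ∀ i : Fin m, 0 < x.1 (coordLaur I i)) ∧
      Continuous (piTorus I) ∧
      ∀ C : Set (Fin m → ℝ), IsCompact C → IsCompact (piTorus I ⁻¹' C) := by
  classical
  -- Part 1: units
  have hunit : ∀ i : Fin m, IsUnit (coordLaur I i) := fun i =>
    IsUnit.of_mul_eq_one _ (coordLaur_mul_inv I i)
  -- Part 2: positivity
  have hpos : ∀ x : ↥(XanTriv k (Laur k m ⧸ I)), ∀ i : Fin m,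
      0 < x.1 (coordLaur I i) := by
    intro x i
    obtain ⟨hsem, -⟩ := x.2
    have h1 : x.1 (coordLaur I i) *
        x.1 (Ideal.Quotient.mk I (AddMonoidAlgebra.single (Pi.single i (-1 : ℤ)) (1 : k)))
        = 1 := by
      rw [← hsem.map_mul, coordLaur_mul_inv, hsem.map_one]
    rcases lt_or_eq_of_le (hsem.nonneg (coordLaur I i)) with h | h
    · exact h
    · exfalso; rw [← h, zero_mul] at h1; exact zero_ne_one h1
  -- Part 3: continuity
  have hcont : Continuous (piTorus I) := by
    apply continuous_pi
    intro i
    simp only [piTorus]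
    have hev : Continuous fun y : ↥(XanTriv k (Laur k m ⧸ I)) =>
        (y.1 : (Laur k m ⧸ I) → ℝ) (coordLaur I i) :=
      (continuous_apply (coordLaur I i)).comp continuous_subtype_val
    rw [continuous_iff_continuousAt]
    intro x
    have hlog : ContinuousAt Real.log (x.1 (coordLaur I i)) :=
      Real.continuousAt_log (ne_of_gt (hpos x i))
    exact (ContinuousAt.comp (x := x) hlog hev.continuousAt).neg
  refine ⟨hunit, hpos, hcont, ?_⟩
  -- Part 4: properness
  intro C hC
  set A := Laur k m ⧸ I
  obtain ⟨r, hr⟩ := hC.isBounded.subset_closedBall 0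
  set R : ℝ := max r 0 with hRdef
  have hR0 : (0 : ℝ) ≤ R := le_max_right r 0
  have hCR : ∀ v ∈ C, ∀ i, |v i| ≤ R := by
    intro v hv i
    have h1 := hr hv
    rw [Metric.mem_closedBall, dist_zero_right] at h1
    calc |v i| = ‖v i‖ := (Real.norm_eq_abs _).symm
      _ ≤ ‖v‖ := norm_le_pi_norm v i
      _ ≤ r := h1
      _ ≤ R := le_max_left r 0
  set q : (A → ℝ) → (Fin m → ℝ) := fun p i => p (coordLaur I i) with hq
  set D : Set (Fin m → ℝ) := (fun v (i : Fin m) => Real.exp (-(v i))) '' C with hD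
  have hDcomp : IsCompact D :=
    hC.image (continuous_pi fun i => Real.continuous_exp.comp (continuous_apply i).neg)
  set T : Set (A → ℝ) :=
    {p | (IsMultSeminorm p ∧ ∀ a : k, a ≠ 0 → p (algebraMap k A a) = 1) ∧ q p ∈ D}
    with hT
  -- the image of the preimage is T
  have himage : Subtype.val '' (piTorus I ⁻¹' C) = T := by
    ext p
    constructor
    · rintro ⟨x, hx, rfl⟩
      refine ⟨x.2, ⟨piTorus I x, hx, ?_⟩⟩
      funext i
      show Real.exp (-(piTorus I x i)) = x.1 (coordLaur I i)
      rw [show piTorus I x i = -Real.log (x.1 (coordLaur I i)) from rfl, neg_neg,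
        Real.exp_log (hpos x i)]
    · rintro ⟨⟨hsem, hconst⟩, v, hvC, hqv⟩
      refine ⟨⟨p, hsem, hconst⟩, ?_, rfl⟩
      show piTorus I ⟨p, hsem, hconst⟩ ∈ C
      have hco : ∀ i, p (coordLaur I i) = Real.exp (-(v i)) := by
        intro i
        have := congrFun hqv i
        exact this.symm
      have : piTorus I ⟨p, hsem, hconst⟩ = v := by
        funext i
        show -Real.log (p (coordLaur I i)) = v i
        rw [hco i, Real.log_exp, neg_neg]
      rw [this]; exact hvC
  -- T is closed
  have hTclosed : IsClosed T := by
    have e1 : IsClosed {p : A → ℝ | ∀ f, 0 ≤ p f} := by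
      have : {p : A → ℝ | ∀ f, 0 ≤ p f} = ⋂ f, {p | 0 ≤ p f} := by ext p; simp
      rw [this]
      exact isClosed_iInter fun f => isClosed_le continuous_const (continuous_apply f)
    have e2 : IsClosed {p : A → ℝ | p 0 = 0} :=
      isClosed_eq (continuous_apply 0) continuous_const
    have e3 : IsClosed {p : A → ℝ | p 1 = 1} :=
      isClosed_eq (continuous_apply 1) continuous_const
    have e4 : IsClosed {p : A → ℝ | ∀ f g, p (f * g) = p f * p g} := by
      have : {p : A → ℝ | ∀ f g, p (f * g) = p f * p g}
          = ⋂ f, ⋂ g, {p | p (f * g) = p f * p g} := by ext p; simp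
      rw [this]
      exact isClosed_iInter fun f => isClosed_iInter fun g =>
        isClosed_eq (continuous_apply _) ((continuous_apply f).mul (continuous_apply g))
    have e5 : IsClosed {p : A → ℝ | ∀ f g, p (f + g) ≤ p f + p g} := by
      have : {p : A → ℝ | ∀ f g, p (f + g) ≤ p f + p g}
          = ⋂ f, ⋂ g, {p | p (f + g) ≤ p f + p g} := by ext p; simp
      rw [this]
      exact isClosed_iInter fun f => isClosed_iInter fun g =>
        isClosed_le (continuous_apply _) ((continuous_apply f).add (continuous_apply g))
    have e6 : IsClosed {p : A → ℝ | ∀ a : k, a ≠ 0 → p (algebraMap k A a) = 1} := by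
      have : {p : A → ℝ | ∀ a : k, a ≠ 0 → p (algebraMap k A a) = 1}
          = ⋂ a : k, ⋂ _ : a ≠ 0, {p | p (algebraMap k A a) = 1} := by ext p; simp
      rw [this]
      exact isClosed_iInter fun a => isClosed_iInter fun _ =>
        isClosed_eq (continuous_apply _) continuous_const
    have e7 : IsClosed {p : A → ℝ | q p ∈ D} := by
      have hqcont : Continuous q := continuous_pi fun i => continuous_apply _
      exact IsClosed.preimage hqcont hDcomp.isClosed
    have hTeq : T = ({p : A → ℝ | ∀ f, 0 ≤ p f} ∩ {p | p 0 = 0} ∩ {p | p 1 = 1}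
        ∩ {p | ∀ f g, p (f * g) = p f * p g} ∩ {p | ∀ f g, p (f + g) ≤ p f + p g}
        ∩ {p | ∀ a : k, a ≠ 0 → p (algebraMap k A a) = 1}) ∩ {p | q p ∈ D} := by
      ext p
      constructor
      · rintro ⟨⟨hsem, hconst⟩, hmem⟩
        exact ⟨⟨⟨⟨⟨⟨hsem.nonneg, hsem.map_zero⟩, hsem.map_one⟩, hsem.map_mul⟩,
          hsem.add_le⟩, hconst⟩, hmem⟩
      · rintro ⟨⟨⟨⟨⟨⟨h1, h2⟩, h3⟩, h4⟩, h5⟩, h6⟩, hmem⟩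
        exact ⟨⟨⟨h1, h2, h3, h4, h5⟩, h6⟩, hmem⟩
    rw [hTeq]
    exact (((((e1.inter e2).inter e3).inter e4).inter e5).inter e6).inter e7
  -- T is contained in a compact box
  have hsurj : ∀ f : A, ∃ g : Laur k m, Ideal.Quotient.mk I g = f :=
    fun f => Ideal.Quotient.mk_surjective f
  set B : A → ℝ := fun f =>
    ∑ u ∈ (hsurj f).choose.coeff.support, Real.exp (R * ∑ i, |(u i : ℝ)|) with hB
  have hTsub : T ⊆ Set.pi Set.univ fun f => Set.Icc 0 (B f) := by
    rintro p ⟨⟨hsem, hconst⟩, v, hvC, hqv⟩ f _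
    constructor
    · exact hsem.nonneg f
    · have hco : ∀ i, p (coordLaur I i) = Real.exp (-(v i)) :=
        fun i => (congrFun hqv i).symm
      have hlo : ∀ i, Real.exp (-R) ≤ p (coordLaur I i) := by
        intro i
        rw [hco i]
        exact Real.exp_le_exp.2 (by have := (abs_le.1 (hCR v hvC i)).2; linarith)
      have hhi : ∀ i, p (coordLaur I i) ≤ Real.exp R := by
        intro i
        rw [hco i]
        exact Real.exp_le_exp.2 (by have := (abs_le.1 (hCR v hvC i)).1; linarith)
      have := laurBound hsem hconst hR0 hlo hhi (hsurj f).choose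
      rw [(hsurj f).choose_spec] at this
      exact this
  have hbox : IsCompact (Set.pi Set.univ fun f : A => Set.Icc (0 : ℝ) (B f)) :=
    isCompact_univ_pi fun f => isCompact_Icc
  rw [Topology.IsEmbedding.subtypeVal.isCompact_iff, himage]
  exact hbox.of_isClosed_subset hTclosed hTsub

end
end
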